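/- arXiv:1404.3516 — 7 statements merged into one kernel-verified Lean document; each statement's English description precedes it below -/
import Mathlib

section
/- Let (μ_n) be a sequence of probability measures on ℕ, let t > 0, and suppose for each n: τ_n ∈ (c, t] for some fixed c > 0, θ_n is a probability measure on ℕ, μ_n = CP(τ_n, θ_n), τ_n → τ, and θ_n converges in distribution to a probability measure θ on ℕ. Then μ_n converges in distribution to CP(τ, θ). -/
open scoped BigOperators
open Filter Topology

noncomputable def poisPMF (t : ℝ) (k : ℕ) : ℝ :=
  Real.exp (-t) * t ^ k / (Nat.factorial k)

noncomputable def convPow (ν : ℕ → ℝ) : ℕ → ℕ → ℝ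
  | 0, k => if k = 0 then 1 else 0
  | (j + 1), k => ∑ i ∈ Finset.range (k + 1), ν i * convPow ν j (k - i)

/-- The compound Poisson distribution `CP(t, ν)`. -/
noncomputable def compoundPoisson (t : ℝ) (ν : ℕ → ℝ) (k : ℕ) : ℝ :=
  ∑' j : ℕ, poisPMF t j * convPow ν j k

lemma convPow_nonneg {ν : ℕ → ℝ} (hν : ∀ i, 0 ≤ ν i) : ∀ j k, 0 ≤ convPow ν j k := by
  intro j
  induction j with
  | zero => intro k; simp [convPow]; split <;> norm_num
  | succ j ih =>
    intro k
    rw [convPow]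
    exact Finset.sum_nonneg fun i _ => mul_nonneg (hν i) (ih _)

lemma convPow_le_one {ν : ℕ → ℝ} (hν : ∀ i, 0 ≤ ν i) (h1 : ∑' i, ν i = 1) :
    ∀ j k, convPow ν j k ≤ 1 := by
  have hsum : Summable ν := by
    by_contra h
    rw [tsum_eq_zero_of_not_summable h] at h1
    norm_num at h1
  intro j
  induction j with
  | zero => intro k; simp [convPow]; split <;> norm_num
  | succ j ih =>
    intro k
    rw [convPow]
    calc ∑ i ∈ Finset.range (k + 1), ν i * convPow ν j (k - i)
        ≤ ∑ i ∈ Finset.range (k + 1), ν i := by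
          apply Finset.sum_le_sum
          intro i _
          nth_rewrite 2 [← mul_one (ν i)]
          exact mul_le_mul_of_nonneg_left (ih _) (hν i)
      _ ≤ ∑' i, ν i := Summable.sum_le_tsum _ (fun i _ => hν i) hsum
      _ = 1 := h1

/-- if `μ_n = CP(τ_n, θ_n)` with `τ_n ∈ (c, t]`, `τ_n → τ`, and the
probability measures `θ_n` on ℕ converge in distribution (i.e. pointwise on pmfs)
to a probability measure `θ` on ℕ, then `μ_n` converges in distribution to `CP(τ, θ)`. -/
theorem compoundPoisson_tendsto (t c : ℝ) (ht : 0 < t) (hc : 0 < c)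
    (τ : ℕ → ℝ) (θ : ℕ → ℕ → ℝ) (τlim : ℝ) (θlim : ℕ → ℝ)
    (hτmem : ∀ n, τ n ∈ Set.Ioc c t)
    (hθ0 : ∀ n k, 0 ≤ θ n k) (hθ1 : ∀ n, ∑' k, θ n k = 1)
    (hθlim0 : ∀ k, 0 ≤ θlim k) (hθlim1 : ∑' k, θlim k = 1)
    (hτ : Tendsto τ atTop (𝓝 τlim))
    (hθ : ∀ k, Tendsto (fun n => θ n k) atTop (𝓝 (θlim k))) :
    ∀ k, Tendsto (fun n => compoundPoisson (τ n) (θ n) k) atTop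
      (𝓝 (compoundPoisson τlim θlim k)) := by
  have hconv : ∀ j k, Tendsto (fun n => convPow (θ n) j k) atTop (𝓝 (convPow θlim j k)) := by
    intro j
    induction j with
    | zero => intro k; simp only [convPow]; exact tendsto_const_nhds
    | succ j ih =>
      intro k
      simp only [convPow]
      exact tendsto_finset_sum _ fun i _ => (hθ i).mul (ih _)
  have hpois : ∀ j, Tendsto (fun n => poisPMF (τ n) j) atTop (𝓝 (poisPMF τlim j)) := by
    intro j
    unfold poisPMF
    exact (((hτ.neg.rexp).mul (hτ.pow j)).div_const _)
  intro k
  unfold compoundPoisson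
  apply tendsto_tsum_of_dominated_convergence (bound := fun j => t ^ j / (Nat.factorial j))
  · exact Real.summable_pow_div_factorial t
  · intro j
    exact (hpois j).mul (hconv j k)
  · filter_upwards with n
    intro j
    have hτn := hτmem n
    have hτpos : 0 < τ n := hc.trans hτn.1
    have h1 : 0 ≤ poisPMF (τ n) j :=
      div_nonneg (mul_nonneg (Real.exp_pos _).le (pow_nonneg hτpos.le _)) (by positivity)
    have h2 : 0 ≤ convPow (θ n) j k := convPow_nonneg (hθ0 n) j k
    rw [Real.norm_eq_abs, abs_of_nonneg (mul_nonneg h1 h2)]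
    calc poisPMF (τ n) j * convPow (θ n) j k
        ≤ poisPMF (τ n) j * 1 :=
          mul_le_mul_of_nonneg_left (convPow_le_one (hθ0 n) (hθ1 n) j k) h1
      _ = poisPMF (τ n) j := mul_one _
      _ ≤ t ^ j / (Nat.factorial j) := by
          unfold poisPMF
          apply div_le_div_of_nonneg_right ?_ (by positivity)
          calc Real.exp (-τ n) * τ n ^ j ≤ 1 * τ n ^ j := by
                apply mul_le_mul_of_nonneg_right _ (pow_nonneg hτpos.le _)
                rw [← Real.exp_zero]
                exact Real.exp_le_exp.mpr (by linarith)
            _ = τ n ^ j := one_mul _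
            _ ≤ t ^ j := pow_le_pow_left₀ hτpos.le hτn.2 j
end

section
/- Let (G,+) be a finite abelian group, (p_g)_{g∈G} ⊂ (0,1) with ∑ p_g = 1, ℙ the Bernoulli product measure on G^ℕ, N ≥ 2, Φ the map (Φω)_j = ω_j + ... + ω_{j+N−1}, and ℙ₀ = ℙ∘Φ^{-1}. Let λ = min_{g∈G} p_g. Then for every n ≥ 1 and g_0,...,g_{n-1} ∈ G and every 0 ≤ m < N: ℙ₀[g_0,...,g_{n−N}] ≤ λ^{-m} ℙ₀[g_0,...,g_{n+m−N}], where a cylinder over an empty or negative index range is the whole space. -/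
open MeasureTheory
open scoped BigOperators Classical

/-- The sliding-window sum map of width `N`: `(Φω)_j = ω_j + ⋯ + ω_{j+N−1}`. -/
def windowSum {G : Type*} [AddCommMonoid G] (N : ℕ) (ω : ℕ → G) : ℕ → G :=
  fun j => ∑ i ∈ Finset.range N, ω (j + i)

namespace WindowAux

variable {G : Type*} [AddCommGroup G] [Fintype G] [MeasurableSpace G]
  [MeasurableSingletonClass G]

/-- extension of a finite word by zeros -/
def ext (L : ℕ) (w : Fin L → G) : ℕ → G := fun i => if h : i < L then w ⟨i, h⟩ else 0

def cyl (L : ℕ) (v : ℕ → G) : Set (ℕ → G) := {ω | ∀ i < L, ω i = v i}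

lemma measurableSet_cyl (L : ℕ) (v : ℕ → G) : MeasurableSet (cyl L v) := by
  have h : cyl L v = ⋂ i ∈ Finset.range L, (fun ω : ℕ → G => ω i) ⁻¹' {v i} := by
    ext ω; simp [cyl]
  rw [h]
  exact MeasurableSet.biInter (Finset.range L).countable_toSet
    (fun i _ => (measurable_pi_apply i) (measurableSet_singleton _))

lemma measure_eq_sum (ℙ : Measure (ℕ → G)) (p : G → ℝ) (L : ℕ) (S : Set (ℕ → G))
    (hdet : ∀ ω ω' : ℕ → G, (∀ i < L, ω i = ω' i) → (ω ∈ S ↔ ω' ∈ S))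
    (hc : ∀ v : ℕ → G, ℙ (cyl L v) = ENNReal.ofReal (∏ i ∈ Finset.range L, p (v i))) :
    ℙ S = ∑ w : Fin L → G,
      S.indicator (fun _ => ENNReal.ofReal (∏ i ∈ Finset.range L, p (ext L w i)))
        (ext L w) := by
  have hS : S = ⋃ w : Fin L → G, if ext L w ∈ S then cyl L (ext L w) else ∅ := by
    ext ω
    constructor
    · intro hω
      refine Set.mem_iUnion.2 ⟨fun i => ω i, ?_⟩
      have hc' : ω ∈ cyl L (ext L (fun i : Fin L => ω i)) := by
        intro i hi; simp [ext, hi]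
      have hm : ext L (fun i : Fin L => ω i) ∈ S := by
        rw [← hdet ω _ (fun i hi => hc' i hi)]; exact hω
      rw [if_pos hm]; exact hc'
    · intro hω
      rcases Set.mem_iUnion.1 hω with ⟨w, hw⟩
      by_cases h : ext L w ∈ S
      · rw [if_pos h] at hw
        exact (hdet ω (ext L w) hw).2 h
      · rw [if_neg h] at hw; exact absurd hw (Set.notMem_empty ω)
  have hcyl : ∀ w w' : Fin L → G, w ≠ w' →
      Disjoint (cyl L (ext L w)) (cyl L (ext L w')) := by
    intro w w' hww
    rw [Set.disjoint_left]
    intro ω h1 h2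
    apply hww
    funext i
    have e1 := h1 i i.2
    have e2 := h2 i i.2
    rw [e1] at e2
    simpa [ext, i.2] using e2
  have hmeas : ∀ w : Fin L → G,
      MeasurableSet (if ext L w ∈ S then cyl L (ext L w) else ∅) := by
    intro w
    split_ifs
    exacts [measurableSet_cyl _ _, MeasurableSet.empty]
  have hdisj : Pairwise (Function.onFun Disjoint
      fun w : Fin L → G => if ext L w ∈ S then cyl L (ext L w) else ∅) := by
    intro w w' hww
    refine Disjoint.mono ?_ ?_ (hcyl w w' hww) <;>
      · show (if _ then _ else _) ≤ _
        split_ifs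
        exacts [le_rfl, Set.empty_subset _]
  conv_lhs => rw [hS]
  rw [measure_iUnion hdisj hmeas, tsum_fintype]
  refine Finset.sum_congr rfl fun w _ => ?_
  by_cases h : ext L w ∈ S
  · rw [if_pos h, Set.indicator_of_mem h, hc]
  · rw [if_neg h, Set.indicator_of_notMem h, measure_empty]

lemma step {p : G → ℝ} (hp : ∀ g, p g ∈ Set.Ioo (0 : ℝ) 1)
    {lam : ℝ} (hlam : IsLeast (Set.range p) lam)
    (ℙ : Measure (ℕ → G))
    (hbern : ∀ (n : ℕ) (w : ℕ → G),
      ℙ {ω | ∀ i < n, ω i = w i} = ENNReal.ofReal (∏ i ∈ Finset.range n, p (w i)))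
    {N : ℕ} (hN : 2 ≤ N) (g : ℕ → G) (k : ℕ) :
    ENNReal.ofReal lam * ℙ {ω | ∀ i < k, windowSum N ω i = g i}
      ≤ ℙ {ω | ∀ i < k + 1, windowSum N ω i = g i} := by
  obtain ⟨N', rfl⟩ : ∃ N', N = N' + 1 := ⟨N - 1, by omega⟩
  set L := k + N' with hL
  have hlam0 : 0 ≤ lam := by
    obtain ⟨g₀, hg₀⟩ := hlam.1
    rw [← hg₀]; exact (hp g₀).1.le
  -- determination of the window-sum conditions by finitely many coordinates
  have hdet : ∀ (K : ℕ) (ω ω' : ℕ → G), (∀ i < K + N', ω i = ω' i) →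
      ((∀ i < K, windowSum (N' + 1) ω i = g i) ↔
        (∀ i < K, windowSum (N' + 1) ω' i = g i)) := by
    have key : ∀ (K : ℕ) (ω ω' : ℕ → G), (∀ i < K + N', ω i = ω' i) →
        ∀ i < K, windowSum (N' + 1) ω i = windowSum (N' + 1) ω' i := by
      intro K ω ω' h i hi
      unfold windowSum
      refine Finset.sum_congr rfl fun j hj => ?_
      exact h (i + j) (by have := Finset.mem_range.1 hj; omega)
    intro K ω ω' h
    constructor <;> intro h' i hi
    · rw [← key K ω ω' h i hi]; exact h' i hi
    · rw [key K ω ω' h i hi]; exact h' i hi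
  set S1 : Set (ℕ → G) := {ω | ∀ i < k, windowSum (N' + 1) ω i = g i} with hS1
  set S2 : Set (ℕ → G) := {ω | ∀ i < k + 1, windowSum (N' + 1) ω i = g i} with hS2
  have e1 : ℙ S1 = ∑ w : Fin L → G,
      S1.indicator (fun _ => ENNReal.ofReal (∏ i ∈ Finset.range L, p (ext L w i)))
        (ext L w) :=
    measure_eq_sum ℙ p L _ (fun ω ω' h => hdet k ω ω' h) (fun v => hbern L v)
  have e2 : ℙ S2 = ∑ w : Fin (L + 1) → G,
      S2.indicator (fun _ => ENNReal.ofReal (∏ i ∈ Finset.range (L + 1),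
        p (ext (L + 1) w i))) (ext (L + 1) w) :=
    measure_eq_sum ℙ p (L + 1) _
      (fun ω ω' h => hdet (k + 1) ω ω' (by intro i hi; exact h i (by omega)))
      (fun v => hbern (L + 1) v)
  rw [e1, e2, Finset.mul_sum]
  -- the forced last letter
  set a : (Fin L → G) → G :=
    fun w => g k - ∑ j ∈ Finset.range N', ext L w (k + j) with ha
  set φ : (Fin L → G) → (Fin (L + 1) → G) :=
    fun w i => if h : (i : ℕ) < L then w ⟨i, h⟩ else a w with hφ
  set F : (Fin (L + 1) → G) → ENNReal :=
    fun w' => S2.indicator (fun _ => ENNReal.ofReal (∏ i ∈ Finset.range (L + 1),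
      p (ext (L + 1) w' i))) (ext (L + 1) w') with hF
  have hφinj : Function.Injective φ := by
    intro w w' h
    funext i
    have h2 := congrFun h ⟨(i : ℕ), by omega⟩
    simp only [hφ, i.2, dif_pos] at h2
    simpa using h2
  have hagree : ∀ w : Fin L → G, ∀ i < L, ext (L + 1) (φ w) i = ext L w i := by
    intro w i hi
    simp only [ext, hφ]
    rw [dif_pos (by omega : i < L + 1), dif_pos hi, dif_pos hi]
  have hlast : ∀ w : Fin L → G, ext (L + 1) (φ w) L = a w := by
    intro w
    simp only [ext, hφ]
    rw [dif_pos (by omega : L < L + 1), dif_neg (by omega : ¬ (L : ℕ) < L)]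
  have hterm : ∀ w : Fin L → G,
      ENNReal.ofReal lam *
        S1.indicator (fun _ => ENNReal.ofReal (∏ i ∈ Finset.range L, p (ext L w i)))
          (ext L w)
      ≤ F (φ w) := by
    intro w
    by_cases hw : ext L w ∈ S1
    · rw [Set.indicator_of_mem hw]
      have hw' : ∀ i < k, windowSum (N' + 1) (ext L w) i = g i := hw
      have hcond : ext (L + 1) (φ w) ∈ S2 := by
        intro i hi
        rcases Nat.lt_or_ge i k with hik | hik
        · have heq : windowSum (N' + 1) (ext (L + 1) (φ w)) i
              = windowSum (N' + 1) (ext L w) i := by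
            unfold windowSum
            refine Finset.sum_congr rfl fun j hj => ?_
            exact hagree w (i + j) (by have := Finset.mem_range.1 hj; omega)
          rw [heq]; exact hw' i hik
        · have hik' : i = k := by omega
          subst hik'
          unfold windowSum
          rw [Finset.sum_range_succ]
          have h1 : ∀ j ∈ Finset.range N',
              ext (L + 1) (φ w) (i + j) = ext L w (i + j) := by
            intro j hj
            exact hagree w (i + j) (by have := Finset.mem_range.1 hj; omega)
          rw [Finset.sum_congr rfl h1]
          have h2 : i + N' = L := by omega
          rw [h2, hlast w, ha]
          rw [add_comm, sub_add_cancel]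
      rw [hF]
      simp only []
      rw [Set.indicator_of_mem hcond]
      have hprod : ∏ i ∈ Finset.range (L + 1), p (ext (L + 1) (φ w) i)
          = (∏ i ∈ Finset.range L, p (ext L w i)) * p (a w) := by
        rw [Finset.prod_range_succ, hlast w]
        congr 1
        exact Finset.prod_congr rfl fun i hi =>
          congrArg p (hagree w i (Finset.mem_range.1 hi))
      rw [hprod, ← ENNReal.ofReal_mul hlam0]
      apply ENNReal.ofReal_le_ofReal
      rw [mul_comm]
      apply mul_le_mul_of_nonneg_left (hlam.2 ⟨a w, rfl⟩)
      exact Finset.prod_nonneg fun i _ => (hp _).1.le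
    · rw [Set.indicator_of_notMem hw, mul_zero]
      exact zero_le
  calc ∑ w : Fin L → G, ENNReal.ofReal lam *
        S1.indicator (fun _ => ENNReal.ofReal (∏ i ∈ Finset.range L, p (ext L w i)))
          (ext L w)
      ≤ ∑ w : Fin L → G, F (φ w) := Finset.sum_le_sum fun w _ => hterm w
    _ = ∑ w' ∈ Finset.univ.image φ, F w' :=
        (Finset.sum_image fun x _ y _ h => hφinj h).symm
    _ ≤ ∑ w' : Fin (L + 1) → G, F w' :=
        Finset.sum_le_sum_of_subset (Finset.subset_univ _)

end WindowAux

/-- with `ℙ₀ = ℙ∘Φ⁻¹` the pushforward of the Bernoulli measure under the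
width-`N` sliding sum, and `λ = min_g p_g`, for every `n ≥ 1`, word `g` and `0 ≤ m < N`:
`ℙ₀[g_0,…,g_{n−N}] ≤ λ^{-m} ℙ₀[g_0,…,g_{n+m−N}]` (cylinders over an empty or negative
index range being the whole space, via truncated subtraction). -/
theorem windowSum_cylinder_bound {G : Type*} [AddCommGroup G] [Fintype G]
    [MeasurableSpace G] [MeasurableSingletonClass G]
    (p : G → ℝ) (hp : ∀ g, p g ∈ Set.Ioo (0 : ℝ) 1) (hsum : ∑ g, p g = 1)
    (lam : ℝ) (hlam : IsLeast (Set.range p) lam)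
    (ℙ : Measure (ℕ → G)) [IsProbabilityMeasure ℙ]
    (hbern : ∀ (n : ℕ) (w : ℕ → G),
      ℙ {ω | ∀ i < n, ω i = w i} = ENNReal.ofReal (∏ i ∈ Finset.range n, p (w i)))
    (N : ℕ) (hN : 2 ≤ N)
    (n : ℕ) (hn : 1 ≤ n) (g : ℕ → G) (m : ℕ) (hm : m < N) :
    ℙ.map (windowSum N) {ω | ∀ i < n + 1 - N, ω i = g i} ≤
      (ENNReal.ofReal lam)⁻¹ ^ m *
        ℙ.map (windowSum N) {ω | ∀ i < n + m + 1 - N, ω i = g i} := by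
  obtain ⟨g₀, hg₀⟩ := hlam.1
  have hlam_pos : 0 < lam := by rw [← hg₀]; exact (hp g₀).1
  have hlam_lt1 : lam < 1 := by rw [← hg₀]; exact (hp g₀).2
  have hl0 : ENNReal.ofReal lam ≠ 0 := by
    simp [ENNReal.ofReal_pos.2 hlam_pos, ne_of_gt]
  have hl_top : ENNReal.ofReal lam ≠ ⊤ := ENNReal.ofReal_ne_top
  have hl1 : ENNReal.ofReal lam ≤ 1 := ENNReal.ofReal_le_one.2 hlam_lt1.le
  have hΦ : Measurable (windowSum N : (ℕ → G) → ℕ → G) :=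
    measurable_pi_lambda _ fun j =>
      Finset.measurable_sum _ fun i _ => measurable_pi_apply _
  have hmapeq : ∀ K : ℕ, ℙ.map (windowSum N) {ω | ∀ i < K, ω i = g i}
      = ℙ {ω | ∀ i < K, windowSum N ω i = g i} := by
    intro K
    have hms : MeasurableSet {ω : ℕ → G | ∀ i < K, ω i = g i} :=
      WindowAux.measurableSet_cyl K g
    rw [Measure.map_apply hΦ hms]
    rfl
  rw [hmapeq, hmapeq]
  set B : ℕ → ENNReal := fun K => ℙ {ω | ∀ i < K, windowSum N ω i = g i} with hB
  have hstep : ∀ k, ENNReal.ofReal lam * B k ≤ B (k + 1) :=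
    fun k => WindowAux.step hp hlam ℙ hbern hN g k
  have hiter : ∀ j k, ENNReal.ofReal lam ^ j * B k ≤ B (k + j) := by
    intro j
    induction j with
    | zero => intro k; simp
    | succ j ih =>
      intro k
      calc ENNReal.ofReal lam ^ (j + 1) * B k
          = ENNReal.ofReal lam * (ENNReal.ofReal lam ^ j * B k) := by ring
        _ ≤ ENNReal.ofReal lam * B (k + j) := mul_le_mul_right (ih k) _
        _ ≤ B (k + j + 1) := hstep (k + j)
  set k₁ := n + 1 - N with hk₁
  set k₂ := n + m + 1 - N with hk₂
  set j := k₂ - k₁ with hj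
  have hjk : k₁ + j = k₂ := by omega
  have hjm : j ≤ m := by omega
  have key : ENNReal.ofReal lam ^ j * B k₁ ≤ B k₂ := by
    rw [← hjk]; exact hiter j k₁
  have hpow_ne0 : ENNReal.ofReal lam ^ j ≠ 0 := pow_ne_zero _ hl0
  have hpow_netop : ENNReal.ofReal lam ^ j ≠ ⊤ := ENNReal.pow_ne_top hl_top
  calc B k₁ = (ENNReal.ofReal lam ^ j)⁻¹ * (ENNReal.ofReal lam ^ j * B k₁) := by
        rw [← mul_assoc, ENNReal.inv_mul_cancel hpow_ne0 hpow_netop, one_mul]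
    _ ≤ (ENNReal.ofReal lam ^ j)⁻¹ * B k₂ := mul_le_mul_right key _
    _ = (ENNReal.ofReal lam)⁻¹ ^ j * B k₂ := by rw [ENNReal.inv_pow]
    _ ≤ (ENNReal.ofReal lam)⁻¹ ^ m * B k₂ := by
        apply mul_le_mul_left
        apply pow_le_pow_right₀ _ hjm
        have h1 : (1 : ENNReal) = 1⁻¹ := by simp
        rw [h1]
        exact ENNReal.inv_le_inv.2 hl1
end

section
/- With G a finite abelian group, (p_g) strictly positive probabilities, ℙ the Bernoulli measure on G^ℕ, N ≥ 2, Φ the width-N sliding-window sum map, ℙ₀ = ℙ∘Φ^{-1}, and λ = min_g p_g: ℙ₀ is ψ-mixing; specifically |ℙ₀(E ∩ T^{-(n+l)}F) − ℙ₀(E)ℙ₀(F)| ≤ (1 + λ^{-N+1})ℙ₀(E)ℙ₀(F) for 0 ≤ l < N−1 and ℙ₀(E ∩ T^{-(n+l)}F) = ℙ₀(E)ℙ₀(F) for l ≥ N−1, for every E measurable with respect to coordinates 0,…,n−1 and every measurable F. -/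
open MeasureTheory
open scoped BigOperators
set_option linter.unusedSectionVars false

/-- The left shift on `𝒜^ℕ`. -/
def shift {𝒜 : Type*} (ω : ℕ → 𝒜) : ℕ → 𝒜 := fun n => ω (n + 1)

section Aux

variable {G : Type*} [MeasurableSpace G] [MeasurableSingletonClass G] [Fintype G]

/-- initial cylinder set -/
def cyl (r : ℕ) (w : ℕ → G) : Set (ℕ → G) := {ω | ∀ i < r, ω i = w i}

lemma shift_iterate_apply (k : ℕ) (ω : ℕ → G) (i : ℕ) : (shift^[k] ω) i = ω (i + k) := by
  induction k generalizing ω i with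
  | zero => simp
  | succ k ih =>
    rw [Function.iterate_succ_apply, ih]
    simp [shift, Nat.add_assoc]

lemma measurable_shift_iterate (k : ℕ) : Measurable (shift^[k] : (ℕ → G) → (ℕ → G)) := by
  have : (shift^[k] : (ℕ → G) → (ℕ → G)) = fun ω i => ω (i + k) := by
    funext ω i; exact shift_iterate_apply k ω i
  rw [this]
  exact measurable_pi_lambda _ (fun i => measurable_pi_apply _)

lemma measurableSet_G (S : Set G) : MeasurableSet S := (Set.toFinite S).measurableSet

lemma measurableSet_cyl (r : ℕ) (w : ℕ → G) : MeasurableSet (cyl r w) := by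
  have : cyl r w = ⋂ (i : ℕ) (_ : i < r), {ω : ℕ → G | ω i = w i} := by
    ext ω; simp [cyl]
  rw [this]
  refine MeasurableSet.iInter fun i => MeasurableSet.iInter fun _ => ?_
  show MeasurableSet ((fun ω : ℕ → G => ω i) ⁻¹' {w i})
  exact (measurable_pi_apply i) (measurableSet_G {w i})

lemma isPiSystem_cyl : IsPiSystem {s : Set (ℕ → G) | ∃ r w, s = cyl r w} := by
  rintro s ⟨r, v, rfl⟩ t ⟨r', v', rfl⟩ hne
  obtain ⟨ω₀, h₀, h₀'⟩ := hne
  refine ⟨max r r', fun i => if i < r then v i else v' i, ?_⟩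
  ext ω
  constructor
  · rintro ⟨h1, h2⟩ i hi
    by_cases h : i < r
    · simpa [h] using h1 i h
    · simpa [h] using h2 i (by omega)
  · intro h
    constructor
    · intro i hi
      have := h i (by omega)
      simpa [hi] using this
    · intro i hi
      have := h i (by omega)
      by_cases hr : i < r
      · simp only [if_pos hr] at this
        rw [this, ← h₀ i hr, h₀' i hi]
      · simpa [hr] using this

lemma generateFrom_cyl :
    (MeasurableSpace.pi : MeasurableSpace (ℕ → G)) =
      MeasurableSpace.generateFrom {s : Set (ℕ → G) | ∃ r w, s = cyl r w} := by
  refine le_antisymm ?_ ?_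
  · rw [MeasurableSpace.pi]
    refine iSup_le fun i => measurable_iff_comap_le.mp ?_
    intro S _
    -- preimage of S under eval i
    have hpre : (fun ω : ℕ → G => ω i) ⁻¹' S =
        ⋃ (g : G) (_ : g ∈ S) (v : Fin (i+1) → G) (_ : v ⟨i, Nat.lt_succ_self i⟩ = g),
          cyl (i+1) (fun j => if h : j < i + 1 then v ⟨j, h⟩ else g) := by
      ext ω
      simp only [Set.mem_preimage, Set.mem_iUnion]
      constructor
      · intro hω
        refine ⟨ω i, hω, fun j => ω j, rfl, fun j hj => ?_⟩
        simp [hj]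
      · rintro ⟨g, hg, v, hv, hω⟩
        have := hω i (Nat.lt_succ_self i)
        simp only [Nat.lt_succ_self, dif_pos] at this
        rwa [this, hv]
    show MeasurableSet[MeasurableSpace.generateFrom {s : Set (ℕ → G) | ∃ r w, s = cyl r w}] ((fun ω : ℕ → G => ω i) ⁻¹' S)
    rw [hpre]
    exact MeasurableSet.iUnion fun g => MeasurableSet.iUnion fun _ =>
      MeasurableSet.iUnion fun v => MeasurableSet.iUnion fun _ =>
        MeasurableSpace.measurableSet_generateFrom ⟨_, _, rfl⟩
  · refine MeasurableSpace.generateFrom_le ?_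
    rintro s ⟨r, w, rfl⟩
    exact measurableSet_cyl r w

end Aux

section Core

variable {G : Type*} [MeasurableSpace G] [MeasurableSingletonClass G] [Fintype G]

lemma core (p : G → ℝ) (hp0 : ∀ g, 0 ≤ p g)
    (P : Measure (ℕ → G)) [IsProbabilityMeasure P]
    (hbern : ∀ (r : ℕ) (w : ℕ → G),
      P (cyl r w) = ENNReal.ofReal (∏ i ∈ Finset.range r, p (w i)))
    (m : ℕ) (w : ℕ → G) {B : Set (ℕ → G)} (hB : MeasurableSet B) :
    P (cyl m w ∩ shift^[m] ⁻¹' B) = P (cyl m w) * P B := by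
  classical
  set μ₁ := (P.restrict (cyl m w)).map (shift^[m]) with hμ₁
  set μ₂ := P (cyl m w) • P with hμ₂
  have happly : ∀ {s : Set (ℕ → G)}, MeasurableSet s → μ₁ s = P (cyl m w ∩ shift^[m] ⁻¹' s) := by
    intro s hs
    rw [hμ₁, Measure.map_apply (measurable_shift_iterate m) hs,
      Measure.restrict_apply (measurable_shift_iterate m hs), Set.inter_comm]
  have key : μ₁ = μ₂ := by
    haveI : IsFiniteMeasure μ₂ := by
      constructor
      rw [hμ₂, Measure.smul_apply, smul_eq_mul, measure_univ, mul_one]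
      exact measure_lt_top P _
    refine ext_of_generate_finite _ generateFrom_cyl isPiSystem_cyl ?_ ?_
    · rintro s ⟨r, v, rfl⟩
      rw [happly (measurableSet_cyl r v)]
      have hset : cyl m w ∩ shift^[m] ⁻¹' cyl r v =
          cyl (m + r) (fun i => if h : i < m then w i else v (i - m)) := by
        ext ω
        simp only [Set.mem_inter_iff, Set.mem_preimage, cyl, Set.mem_setOf_eq,
          shift_iterate_apply]
        constructor
        · rintro ⟨h1, h2⟩ i hi
          by_cases h : i < m
          · simp [h, h1 i h]
          · have := h2 (i - m) (by omega)
            rw [show i - m + m = i by omega] at this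
            simp [h, this]
        · intro h
          constructor
          · intro i hi
            simpa [hi] using h i (by omega)
          · intro i hi
            have := h (i + m) (by omega)
            simpa [show ¬ (i + m < m) by omega, Nat.add_sub_cancel] using this
      rw [hset, hbern]
      have hsplit : ∏ i ∈ Finset.range (m + r),
          p ((fun i => if h : i < m then w i else v (i - m)) i) =
          (∏ i ∈ Finset.range m, p (w i)) * ∏ i ∈ Finset.range r, p (v i) := by
        rw [Finset.prod_range_add]
        congr 1
        · refine Finset.prod_congr rfl fun i hi => ?_
          rw [Finset.mem_range] at hi
          simp [hi]
        · refine Finset.prod_congr rfl fun i hi => ?_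
          simp [show ¬ (m + i < m) by omega, Nat.add_sub_cancel_left]
      rw [hsplit, ENNReal.ofReal_mul (Finset.prod_nonneg fun i _ => hp0 _)]
      rw [hμ₂, Measure.smul_apply, smul_eq_mul, hbern m w, hbern r v]
    · rw [happly MeasurableSet.univ]
      simp [hμ₂, Measure.smul_apply]
  rw [← happly hB, key, hμ₂, Measure.smul_apply, smul_eq_mul]

lemma master (p : G → ℝ) (hp0 : ∀ g, 0 ≤ p g)
    (P : Measure (ℕ → G)) [IsProbabilityMeasure P]
    (hbern : ∀ (r : ℕ) (w : ℕ → G),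
      P (cyl r w) = ENNReal.ofReal (∏ i ∈ Finset.range r, p (w i)))
    (g₀ : G) (m : ℕ) {A B : Set (ℕ → G)}
    (hA : MeasurableSet[MeasurableSpace.comap (fun (ω : ℕ → G) (i : Fin m) => ω i)
      inferInstance] A)
    (hB : MeasurableSet B) :
    P (A ∩ shift^[m] ⁻¹' B) = P A * P B := by
  classical
  obtain ⟨S, hS, rfl⟩ := hA
  set ex : (Fin m → G) → ℕ → G := fun x j => if h : j < m then x ⟨j, h⟩ else g₀ with hex
  have hfib : ∀ x : Fin m → G,
      (fun (ω : ℕ → G) (i : Fin m) => ω i) ⁻¹' {x} = cyl m (ex x) := by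
    intro x; ext ω
    simp only [Set.mem_preimage, Set.mem_singleton_iff, funext_iff, cyl, Set.mem_setOf_eq]
    constructor
    · intro h i hi
      simpa [hex, hi] using h ⟨i, hi⟩
    · intro h i
      simpa [hex, i.2] using h i.1 i.2
  have hA_eq : (fun (ω : ℕ → G) (i : Fin m) => ω i) ⁻¹' S =
      ⋃ x ∈ S.toFinset, cyl m (ex x) := by
    ext ω
    simp only [Set.mem_preimage, Set.mem_iUnion, Set.mem_toFinset]
    constructor
    · intro h
      exact ⟨fun i => ω i, h, fun i hi => by simp [hex, hi]⟩
    · rintro ⟨x, hx, hω⟩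
      have : ω ∈ (fun (ω : ℕ → G) (i : Fin m) => ω i) ⁻¹' {x} := by rw [hfib]; exact hω
      simp only [Set.mem_preimage, Set.mem_singleton_iff] at this
      rw [this]; exact hx
  have hdisj : (↑S.toFinset : Set (Fin m → G)).PairwiseDisjoint (fun x => cyl m (ex x)) := by
    intro x _ y _ hxy
    refine Set.disjoint_left.mpr fun ω hx hy => hxy ?_
    funext i
    have h1 := hx i.1 i.2
    have h2 := hy i.1 i.2
    rw [h1] at h2
    simpa [hex, i.2] using h2
  have hdisj2 : (↑S.toFinset : Set (Fin m → G)).PairwiseDisjoint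
      (fun x => cyl m (ex x) ∩ shift^[m] ⁻¹' B) := fun x hx y hy hxy =>
    ((hdisj hx hy hxy).mono (Set.inter_subset_left) (Set.inter_subset_left))
  rw [hA_eq, Set.iUnion₂_inter]
  rw [measure_biUnion_finset hdisj2
    (fun x _ => (measurableSet_cyl m (ex x)).inter ((measurable_shift_iterate m) hB))]
  rw [measure_biUnion_finset hdisj (fun x _ => measurableSet_cyl m (ex x))]
  rw [Finset.sum_mul]
  exact Finset.sum_congr rfl fun x _ => core p hp0 P hbern m (ex x) hB

lemma shift_inv (p : G → ℝ) (hp0 : ∀ g, 0 ≤ p g)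
    (P : Measure (ℕ → G)) [IsProbabilityMeasure P]
    (hbern : ∀ (r : ℕ) (w : ℕ → G),
      P (cyl r w) = ENNReal.ofReal (∏ i ∈ Finset.range r, p (w i)))
    (g₀ : G) (m : ℕ) {B : Set (ℕ → G)} (hB : MeasurableSet B) :
    P (shift^[m] ⁻¹' B) = P B := by
  have := master p hp0 P hbern g₀ m (A := Set.univ) MeasurableSet.univ hB
  simpa using this


end Core

/-- the pushforward `ℙ₀ = ℙ∘Φ⁻¹` of the Bernoulli measure under the
width-`N` sliding sum is ψ-mixing: with `λ = min_g p_g`, for `0 ≤ l < N−1`,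
`|ℙ₀(E ∩ T^{-(n+l)}F) − ℙ₀(E)ℙ₀(F)| ≤ (1 + λ^{-(N−1)}) ℙ₀(E)ℙ₀(F)`,
and for `l ≥ N−1`, `ℙ₀(E ∩ T^{-(n+l)}F) = ℙ₀(E)ℙ₀(F)`, for every `E` measurable with
respect to coordinates `0,…,n−1` and every measurable `F`. -/
theorem windowSum_pushforward_psi_mixing {G : Type*} [AddCommGroup G] [Fintype G]
    [MeasurableSpace G] [MeasurableSingletonClass G]
    (p : G → ℝ) (hp : ∀ g, p g ∈ Set.Ioo (0 : ℝ) 1) (hsum : ∑ g, p g = 1)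
    (lam : ℝ) (hlam : IsLeast (Set.range p) lam)
    (ℙ : Measure (ℕ → G)) [IsProbabilityMeasure ℙ]
    (hbern : ∀ (n : ℕ) (w : ℕ → G),
      ℙ {ω | ∀ i < n, ω i = w i} = ENNReal.ofReal (∏ i ∈ Finset.range n, p (w i)))
    (N : ℕ) (hN : 2 ≤ N) (ℙ₀ : Measure (ℕ → G)) (hℙ₀ : ℙ₀ = ℙ.map (windowSum N))
    (n : ℕ) (E F : Set (ℕ → G))
    (hE : MeasurableSet[MeasurableSpace.comap (fun ω (i : Fin n) => ω i) inferInstance] E)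
    (hF : MeasurableSet F) :
    (∀ l, l < N - 1 →
      |(ℙ₀ (E ∩ (shift^[n + l]) ⁻¹' F)).toReal - (ℙ₀ E).toReal * (ℙ₀ F).toReal| ≤
        (1 + lam⁻¹ ^ (N - 1)) * (ℙ₀ E).toReal * (ℙ₀ F).toReal) ∧
    (∀ l, N - 1 ≤ l → ℙ₀ (E ∩ (shift^[n + l]) ⁻¹' F) = ℙ₀ E * ℙ₀ F) := by
  classical
  have hGne : Nonempty G := by
    by_contra hne
    rw [not_nonempty_iff] at hne
    rw [Finset.univ_eq_empty, Finset.sum_empty] at hsum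
    norm_num at hsum
  obtain ⟨g₀⟩ := hGne
  have hp0 : ∀ g, 0 ≤ p g := fun g => (hp g).1.le
  obtain ⟨gl, hgl⟩ := hlam.1
  have hlam0 : (0 : ℝ) < lam := hgl ▸ (hp gl).1
  have hlam1 : lam ≤ 1 := hgl ▸ (hp gl).2.le
  have hlam_le : ∀ g, lam ≤ p g := fun g => hlam.2 ⟨g, rfl⟩
  have hbern' : ∀ (r : ℕ) (w : ℕ → G),
      ℙ (cyl r w) = ENNReal.ofReal (∏ i ∈ Finset.range r, p (w i)) := hbern
  haveI : MeasurableAdd₂ G := ⟨measurable_of_countable _⟩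
  have hΦ : Measurable (windowSum N : (ℕ → G) → ℕ → G) := by
    refine measurable_pi_lambda _ fun j => ?_
    exact Finset.measurable_sum _ fun i _ => measurable_pi_apply _
  haveI : IsProbabilityMeasure ℙ₀ := hℙ₀ ▸ Measure.isProbabilityMeasure_map hΦ.aemeasurable
  set d := N - 1 with hd
  have hdN : N = d + 1 := by omega
  have hd1 : 1 ≤ d := by omega
  set m := n + d with hm
  have hπ : Measurable (fun (ω : ℕ → G) (i : Fin n) => ω i) :=
    measurable_pi_lambda _ fun i => measurable_pi_apply _
  obtain ⟨S, hS, hES⟩ := hE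
  have hE_pi : MeasurableSet E := hES ▸ hπ hS
  have hidx : ∀ (j : Fin n) (i : Fin N), (j : ℕ) + (i : ℕ) < m := by
    intro j i
    have := j.2
    have := i.2
    omega
  set gg : (Fin m → G) → Fin n → G := fun x j => ∑ i : Fin N, x ⟨j.1 + i.1, hidx j i⟩
    with hgg
  have hcomm : ∀ (ω : ℕ → G) (j : Fin n),
      windowSum N ω j = gg (fun i : Fin m => ω i) j := by
    intro ω j
    simp only [windowSum, hgg]
    rw [Fin.sum_univ_eq_sum_range (fun i => ω (j.1 + i)) N]
  have hA : MeasurableSet[MeasurableSpace.comap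
      (fun (ω : ℕ → G) (i : Fin m) => ω i) inferInstance] (windowSum N ⁻¹' E) := by
    refine ⟨gg ⁻¹' S, (measurable_of_countable gg) hS, ?_⟩
    rw [← hES]
    ext ω
    simp only [Set.mem_preimage]
    have : (fun i : Fin n => windowSum N ω i) = gg (fun i : Fin m => ω i) :=
      funext fun j => hcomm ω j
    rw [this]
  have hcommshift : ∀ (k : ℕ) (ω : ℕ → G),
      shift^[k] (windowSum N ω) = windowSum N (shift^[k] ω) := by
    intro k ω
    funext j
    rw [shift_iterate_apply]
    simp only [windowSum]
    refine Finset.sum_congr rfl fun i _ => ?_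
    rw [shift_iterate_apply]
    congr 1
    omega
  have hpre_comm : ∀ (k : ℕ) (X : Set (ℕ → G)),
      windowSum N ⁻¹' (shift^[k] ⁻¹' X) = shift^[k] ⁻¹' (windowSum N ⁻¹' X) := by
    intro k X
    ext ω
    simp only [Set.mem_preimage, hcommshift]
  set A := windowSum N ⁻¹' E with hAdef
  set B := windowSum N ⁻¹' F with hBdef
  have hBm : MeasurableSet B := hΦ hF
  have hmap : ∀ {X : Set (ℕ → G)}, MeasurableSet X → ℙ₀ X = ℙ (windowSum N ⁻¹' X) := by
    intro X hX
    rw [hℙ₀, Measure.map_apply hΦ hX]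
  have hP0E : ℙ₀ E = ℙ A := hmap hE_pi
  have hP0F : ℙ₀ F = ℙ B := hmap hF
  have hP0EF : ∀ k : ℕ, ℙ₀ (E ∩ shift^[k] ⁻¹' F) = ℙ (A ∩ shift^[k] ⁻¹' B) := by
    intro k
    rw [hmap (hE_pi.inter (measurable_shift_iterate k hF)), Set.preimage_inter,
      hpre_comm, hAdef, hBdef]
  refine ⟨?_, ?_⟩
  · -- Part 1 : l < d
    intro l hl
    set k := n + l with hk
    set t := d - l with ht
    have ht1 : 1 ≤ t := by omega
    have hkt : k + t = m := by omega
    set L := ENNReal.ofReal lam with hL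
    have hL0 : L ≠ 0 := (ENNReal.ofReal_pos.mpr hlam0).ne'
    have hLtop : L ≠ ⊤ := ENNReal.ofReal_ne_top
    set ey : (Fin t → G) → ℕ → G := fun y j => if h : j < t then y ⟨j, h⟩ else g₀ with hey
    set sw : (Fin t → G) → (ℕ → G) → (ℕ → G) :=
      fun y τ j => if h : j < t then y ⟨j, h⟩ else τ (j - t) with hsw
    have hsw_meas : ∀ y, Measurable (sw y) := by
      intro y
      refine measurable_pi_lambda _ fun j => ?_
      by_cases h : j < t
      · simp only [hsw, dif_pos h]
        exact measurable_const
      · simp only [hsw, dif_neg h]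
        exact measurable_pi_apply _
    set Bw : (Fin t → G) → Set (ℕ → G) := fun y => sw y ⁻¹' B with hBw
    have hBw_meas : ∀ y, MeasurableSet (Bw y) := fun y => hsw_meas y hBm
    have hDB : ∀ y : Fin t → G,
        cyl t (ey y) ∩ B = cyl t (ey y) ∩ shift^[t] ⁻¹' (Bw y) := by
      intro y
      ext ω
      simp only [Set.mem_inter_iff, Set.mem_preimage]
      refine and_congr_right fun hω => ?_
      have heq : sw y (shift^[t] ω) = ω := by
        funext j
        by_cases h : j < t
        · rw [hω j h]
          simp [hsw, hey, h]
        · simp only [hsw, dif_neg h, shift_iterate_apply]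
          congr 1
          omega
      show ω ∈ B ↔ sw y (shift^[t] ω) ∈ B
      rw [heq]
    have key : ℙ (A ∩ shift^[k] ⁻¹' B) ≤ L⁻¹ ^ t * (ℙ A * ℙ B) := by
      have hcover : A ∩ shift^[k] ⁻¹' B = ⋃ y : Fin t → G,
          ((A ∩ shift^[k] ⁻¹' (cyl t (ey y))) ∩ shift^[m] ⁻¹' (Bw y)) := by
        ext ω
        simp only [Set.mem_iUnion, Set.mem_inter_iff, Set.mem_preimage]
        constructor
        · rintro ⟨hωA, hωB⟩
          refine ⟨fun i => (shift^[k] ω) i.1, ⟨hωA, fun i hi => by simp [hey, hi]⟩, ?_⟩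
          have heq : sw (fun i : Fin t => (shift^[k] ω) i.1) (shift^[m] ω) = shift^[k] ω := by
            funext j
            by_cases h : j < t
            · simp [hsw, h]
            · simp only [hsw, dif_neg h, shift_iterate_apply]
              congr 1
              omega
          show sw (fun i : Fin t => (shift^[k] ω) i.1) (shift^[m] ω) ∈ B
          rw [heq]
          exact hωB
        · rintro ⟨y, ⟨hωA, hωD⟩, hωB⟩
          refine ⟨hωA, ?_⟩
          have h2 : shift^[k] ω ∈ shift^[t] ⁻¹' (Bw y) := by
            simp only [Set.mem_preimage]
            rw [← Function.iterate_add_apply, show t + k = m from by omega]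
            exact hωB
          exact ((Set.ext_iff.mp (hDB y) (shift^[k] ω)).mpr ⟨hωD, h2⟩).2
      rw [hcover]
      refine le_trans (measure_iUnion_fintype_le _ _) ?_
      have hterm : ∀ y : Fin t → G,
          ℙ ((A ∩ shift^[k] ⁻¹' (cyl t (ey y))) ∩ shift^[m] ⁻¹' (Bw y)) ≤
            ℙ A * (L⁻¹ ^ t * ℙ (cyl t (ey y) ∩ B)) := by
        intro y
        have hcylm : MeasurableSet[MeasurableSpace.comap
            (fun (ω : ℕ → G) (i : Fin m) => ω i) inferInstance]
            (shift^[k] ⁻¹' (cyl t (ey y))) := by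
          refine ⟨{x : Fin m → G | ∀ i : Fin t, x ⟨i.1 + k, by omega⟩ = y i},
            (Set.toFinite _).measurableSet, ?_⟩
          ext ω
          simp only [Set.mem_preimage, Set.mem_setOf_eq, cyl]
          constructor
          · intro h i hi
            have := h ⟨i, hi⟩
            rw [shift_iterate_apply]
            simpa [hey, hi] using this
          · intro h i
            have := h i.1 i.2
            rw [shift_iterate_apply] at this
            simpa [hey, i.2] using this
        have hmaster := master p hp0 ℙ hbern' g₀ m (hA.inter hcylm) (hBw_meas y)
        rw [hmaster]
        have hDw : ℙ (cyl t (ey y) ∩ shift^[t] ⁻¹' (Bw y)) = ℙ (cyl t (ey y)) * ℙ (Bw y) :=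
          core p hp0 ℙ hbern' t (ey y) (hBw_meas y)
        have hcyl_lb : L ^ t ≤ ℙ (cyl t (ey y)) := by
          rw [hbern', hL, ← ENNReal.ofReal_pow hlam0.le]
          apply ENNReal.ofReal_le_ofReal
          calc lam ^ t = ∏ _i ∈ Finset.range t, lam := by
                rw [Finset.prod_const, Finset.card_range]
          _ ≤ ∏ i ∈ Finset.range t, p (ey y i) :=
                Finset.prod_le_prod (fun _ _ => hlam0.le) (fun i _ => hlam_le _)
        have hBw_ub : ℙ (Bw y) ≤ L⁻¹ ^ t * ℙ (cyl t (ey y) ∩ B) := by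
          have h1 : L ^ t * ℙ (Bw y) ≤ ℙ (cyl t (ey y) ∩ B) := by
            rw [hDB y, hDw]
            exact mul_le_mul_left hcyl_lb _
          calc ℙ (Bw y) = L⁻¹ ^ t * (L ^ t * ℙ (Bw y)) := by
                rw [← mul_assoc, ← mul_pow, ENNReal.inv_mul_cancel hL0 hLtop, one_pow, one_mul]
          _ ≤ L⁻¹ ^ t * ℙ (cyl t (ey y) ∩ B) := mul_le_mul_right h1 _
        exact mul_le_mul' (measure_mono Set.inter_subset_left) hBw_ub
      refine le_trans (Finset.sum_le_sum fun y _ => hterm y) ?_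
      have hsum_cyl : ∑ y : Fin t → G, ℙ (cyl t (ey y) ∩ B) = ℙ B := by
        have hcov : ⋃ y : Fin t → G, (cyl t (ey y) ∩ B) = B := by
          ext ω
          simp only [Set.mem_iUnion, Set.mem_inter_iff]
          constructor
          · rintro ⟨y, _, h⟩
            exact h
          · intro h
            exact ⟨fun i => ω i.1, fun i hi => by simp [hey, hi], h⟩
        have hdisj : Pairwise (Function.onFun Disjoint
            (fun y : Fin t → G => cyl t (ey y) ∩ B)) := by
          intro y y' hyy'
          refine Set.disjoint_left.mpr fun ω hx hy => hyy' ?_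
          funext i
          have h1 := hx.1 i.1 i.2
          have h2 := hy.1 i.1 i.2
          rw [h1] at h2
          simpa [hey, i.2] using h2
        conv_rhs => rw [← hcov]
        rw [measure_iUnion hdisj
          (fun y => (measurableSet_cyl t (ey y)).inter hBm), tsum_fintype]
      rw [← Finset.mul_sum, ← Finset.mul_sum, hsum_cyl]
      exact le_of_eq (by ring)
    have hLinv1 : (1 : ENNReal) ≤ L⁻¹ := ENNReal.one_le_inv.mpr (ENNReal.ofReal_le_one.mpr hlam1)
    have hLinv_mono : L⁻¹ ^ t ≤ L⁻¹ ^ d := pow_le_pow_right₀ hLinv1 (by omega)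
    have key2 : ℙ₀ (E ∩ shift^[k] ⁻¹' F) ≤ L⁻¹ ^ d * (ℙ₀ E * ℙ₀ F) := by
      rw [hP0EF, hP0E, hP0F]
      exact key.trans (mul_le_mul_left hLinv_mono _)
    have hRHS_ne : L⁻¹ ^ d * (ℙ₀ E * ℙ₀ F) ≠ ⊤ := by
      refine ENNReal.mul_ne_top (ENNReal.pow_ne_top (ENNReal.inv_ne_top.mpr hL0)) ?_
      exact ENNReal.mul_ne_top (measure_ne_top _ _) (measure_ne_top _ _)
    have hx := ENNReal.toReal_mono hRHS_ne key2
    rw [ENNReal.toReal_mul, ENNReal.toReal_mul] at hx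
    have hLtoReal : (L⁻¹ ^ d).toReal = lam⁻¹ ^ d := by
      rw [ENNReal.toReal_pow, ENNReal.toReal_inv, hL, ENNReal.toReal_ofReal hlam0.le]
    rw [hLtoReal] at hx
    have ha : 0 ≤ (ℙ₀ E).toReal := ENNReal.toReal_nonneg
    have hb : 0 ≤ (ℙ₀ F).toReal := ENNReal.toReal_nonneg
    have hc : 0 ≤ lam⁻¹ ^ d := pow_nonneg (inv_nonneg.mpr hlam0.le) d
    have hx0 : 0 ≤ (ℙ₀ (E ∩ shift^[k] ⁻¹' F)).toReal := ENNReal.toReal_nonneg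
    rw [abs_le]
    constructor
    · nlinarith [mul_nonneg ha hb]
    · nlinarith [mul_nonneg ha hb]
  · -- Part 2 : d ≤ l
    intro l hl
    set k := n + l with hk
    have hkm : m ≤ k := by omega
    rw [hP0EF, hP0E, hP0F]
    have hdecomp : shift^[k] ⁻¹' B = shift^[m] ⁻¹' (shift^[k - m] ⁻¹' B) := by
      ext ω
      simp only [Set.mem_preimage]
      rw [← Function.iterate_add_apply, show (k - m) + m = k by omega]
    rw [hdecomp,
      master p hp0 ℙ hbern' g₀ m hA ((measurable_shift_iterate (k - m)) hBm),
      shift_inv p hp0 ℙ hbern' g₀ (k - m) hBm]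
end

section
/- Let G be a finite abelian group, (p_g)_{g∈G} strictly positive probabilities summing to 1, with a unique maximizer h (p_h > p_g for all g ≠ h), and let r ≠ h maximize p over G∖{h}. Assume p_h ≠ p_r (automatic). Then with N ≥ 2, Φ the width-N sliding sum, ℙ₀ = ℙ∘Φ^{-1}, and s = (N−1)·h + r, the limit lim_n ℙ₀([s^{n+1}] | [s^n]) does not exist; along n with n+N−1 ≡ 0 mod N the ratio tends to (p_r + (N−1)p_h)/N, while along n with n+N−1 ≡ N−1 mod N it tends to N p_h p_r / ((N−1)p_r + p_h), and these two values are distinct. -/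
open MeasureTheory Filter Topology
open scoped BigOperators

namespace WS

variable {X : Type*} {G : Type*} [AddCommGroup G]

/-- Periodic extension of a word of length `N`. -/
def per {N : ℕ} (hN : 0 < N) (a : Fin N → X) (i : ℕ) : X :=
  a ⟨i % N, Nat.mod_lt _ hN⟩

lemma per_small {N : ℕ} (hN : 0 < N) (a : Fin N → X) (i : ℕ) (hi : i < N) :
    per hN a i = a ⟨i, hi⟩ := by
  simp [per, Nat.mod_eq_of_lt hi]

lemma per_fin {N : ℕ} (hN : 0 < N) (a : Fin N → X) (j : Fin N) :
    per hN a ↑j = a j := by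
  simp [per, Nat.mod_eq_of_lt j.isLt]

lemma per_add {N : ℕ} (hN : 0 < N) (a : Fin N → X) (i : ℕ) :
    per hN a (i + N) = per hN a i := by
  simp [per, Nat.add_mod_right]

lemma per_mod {N : ℕ} (hN : 0 < N) (a : Fin N → X) (i : ℕ) :
    per hN a (i % N) = per hN a i := by
  simp [per, Nat.mod_mod_of_dvd _ dvd_rfl]

lemma prod_periodic (g : ℕ → ℝ) (N q t : ℕ) (ht : t ≤ N) :
    ∏ i ∈ Finset.range (q * N + t), g (i % N)
      = (∏ j ∈ Finset.range N, g j) ^ q * ∏ j ∈ Finset.range t, g j := by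
  induction q with
  | zero =>
      simp only [Nat.zero_mul, Nat.zero_add, pow_zero, one_mul]
      exact Finset.prod_congr rfl fun i hi => by
        rw [Nat.mod_eq_of_lt (lt_of_lt_of_le (Finset.mem_range.mp hi) ht)]
  | succ q ih =>
      have hsplit : (q+1) * N + t = N + (q*N + t) := by ring
      rw [hsplit, Finset.prod_range_add]
      have h1 : ∀ i ∈ Finset.range N, g (i % N) = g i := fun i hi => by
        rw [Nat.mod_eq_of_lt (Finset.mem_range.mp hi)]
      have h2 : ∀ i, g ((N + i) % N) = g (i % N) := fun i => by
        rw [Nat.add_mod_left]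
      calc (∏ i ∈ Finset.range N, g (i % N)) * ∏ i ∈ Finset.range (q*N+t), g ((N+i) % N)
          = (∏ i ∈ Finset.range N, g i) * ∏ i ∈ Finset.range (q*N+t), g (i % N) := by
            rw [Finset.prod_congr rfl h1, Finset.prod_congr rfl (fun i _ => h2 i)]
        _ = (∏ j ∈ Finset.range N, g j) ^ (q+1) * ∏ j ∈ Finset.range t, g j := by
            rw [ih]; ring

lemma window_shift (f : ℕ → G) (N : ℕ) (hN : 0 < N) (i : ℕ) :
    (∑ j ∈ Finset.range N, f (i + 1 + j)) + f i
      = (∑ j ∈ Finset.range N, f (i + j)) + f (i + N) := by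
  obtain ⟨K, rfl⟩ : ∃ K, N = K + 1 := ⟨N - 1, by omega⟩
  rw [Finset.sum_range_succ, Finset.sum_range_succ']
  rw [Finset.sum_congr rfl (fun j _ => by rw [show i + (j + 1) = i + 1 + j by omega] :
    ∀ j ∈ Finset.range K, f (i + (j + 1)) = f (i + 1 + j))]
  rw [show i + 1 + K = i + (K + 1) by omega, add_zero]
  abel

lemma sum_per_shift {N : ℕ} (hN : 0 < N) (a : Fin N → G) (i : ℕ) :
    ∑ j ∈ Finset.range N, per hN a (i + j) = ∑ j ∈ Finset.range N, per hN a j := by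
  induction i with
  | zero => simp
  | succ i ih =>
      have hw := window_shift (per hN a) N hN i
      rw [per_add] at hw
      rw [add_right_cancel hw, ih]

lemma sum_per_range {N : ℕ} (hN : 0 < N) (a : Fin N → G) :
    ∑ j ∈ Finset.range N, per hN a j = ∑ j : Fin N, a j := by
  rw [← Fin.sum_univ_eq_sum_range (fun j => per hN a j) N]
  exact Finset.sum_congr rfl fun j _ => per_fin hN a j

/-- The cylinder decomposition of a constant `windowSum`-cylinder. -/
lemma cyl_decomp [Fintype G] [DecidableEq G] {N : ℕ} (hN : 0 < N) (s : G) (m : ℕ) :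
    windowSum N ⁻¹' {ω : ℕ → G | ∀ i < m + 1, ω i = s}
      = ⋃ a ∈ Finset.univ.filter (fun a : Fin N → G => ∑ j, a j = s),
          {ω : ℕ → G | ∀ i < m + N, ω i = per hN a i} := by
  ext ω
  simp only [Set.mem_preimage, Set.mem_setOf_eq, Set.mem_iUnion, Finset.mem_filter,
    Finset.mem_univ, true_and, exists_prop]
  constructor
  · intro hω
    have hper : ∀ i, i < m → ω (i + N) = ω i := by
      intro i him
      have h1 := hω i (by omega)
      have h2 := hω (i + 1) (by omega)
      have hw := window_shift ω N hN i
      unfold windowSum at h1 h2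
      rw [h1, h2] at hw
      exact (add_left_cancel hw).symm
    refine ⟨fun j => ω ↑j, ?_, ?_⟩
    · have h0 := hω 0 (by omega)
      unfold windowSum at h0
      simp only [Nat.zero_add] at h0
      rw [← Fin.sum_univ_eq_sum_range (fun i => ω i) N] at h0
      exact h0
    · intro i
      induction i using Nat.strong_induction_on with
      | _ i IH =>
        intro hi
        by_cases hiN : i < N
        · rw [per_small hN _ i hiN]
        · have hi' : i - N + N = i := by omega
          have hp2 := hper (i - N) (by omega)
          rw [hi'] at hp2
          rw [← hi', per_add, hi', hp2]
          exact IH (i - N) (by omega) (by omega)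
  · rintro ⟨a, hsa, hωa⟩ i hi
    unfold windowSum
    have : ∀ j ∈ Finset.range N, ω (i + j) = per hN a (i + j) := by
      intro j hj
      exact hωa (i + j) (by have := Finset.mem_range.mp hj; omega)
    rw [Finset.sum_congr rfl this, sum_per_shift hN a i, sum_per_range hN a, hsa]

lemma measurable_windowSum {G : Type*} [AddCommMonoid G] [MeasurableSpace G]
    [MeasurableAdd₂ G] (N : ℕ) : Measurable (windowSum (G := G) N) :=
  measurable_pi_lambda _ fun _ => Finset.measurable_sum _ fun _ _ => measurable_pi_apply _

lemma measurableSet_cyl {G : Type*} [MeasurableSpace G] [MeasurableSingletonClass G]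
    (n : ℕ) (w : ℕ → G) : MeasurableSet {ω : ℕ → G | ∀ i < n, ω i = w i} := by
  have hrw : {ω : ℕ → G | ∀ i < n, ω i = w i}
      = ⋂ i ∈ Set.Iio n, (fun ω : ℕ → G => ω i) ⁻¹' {w i} := by
    ext ω; simp [Set.mem_iInter]
  rw [hrw]
  exact MeasurableSet.biInter (Set.to_countable _)
    (fun i _ => measurable_pi_apply i (measurableSet_singleton _))

lemma map_cyl {G : Type*} [AddCommGroup G] [Fintype G] [DecidableEq G] [MeasurableSpace G]
    [MeasurableSingletonClass G]
    (p : G → ℝ) (ℙ : Measure (ℕ → G))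
    (hbern : ∀ (n : ℕ) (w : ℕ → G),
      ℙ {ω | ∀ i < n, ω i = w i} = ENNReal.ofReal (∏ i ∈ Finset.range n, p (w i)))
    {N : ℕ} (hN : 0 < N) (s : G) (m : ℕ) :
    ℙ.map (windowSum N) {ω | ∀ i < m + 1, ω i = s}
      = ∑ a ∈ Finset.univ.filter (fun a : Fin N → G => ∑ j, a j = s),
          ENNReal.ofReal (∏ i ∈ Finset.range (m + N), p (per hN a i)) := by
  have hmadd : MeasurableAdd₂ G := ⟨measurable_of_countable _⟩
  rw [Measure.map_apply (measurable_windowSum N) (measurableSet_cyl (m+1) (fun _ => s))]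
  rw [cyl_decomp hN s m]
  rw [measure_biUnion_finset ?hd ?hm]
  · exact Finset.sum_congr rfl fun a _ => hbern (m + N) (per hN a)
  case hm => exact fun a _ => measurableSet_cyl (m + N) (per hN a)
  case hd =>
    intro a _ b _ hab
    simp only [Set.disjoint_left]
    intro ω hωa hωb
    apply hab
    funext j
    have h1 := hωa ↑j (by have := j.isLt; omega)
    have h2 := hωb ↑j (by have := j.isLt; omega)
    rw [per_fin] at h1 h2
    rw [← h1, ← h2]

lemma map_cyl_toReal {G : Type*} [AddCommGroup G] [Fintype G] [DecidableEq G] [MeasurableSpace G]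
    [MeasurableSingletonClass G]
    (p : G → ℝ) (hp : ∀ g, 0 ≤ p g) (ℙ : Measure (ℕ → G))
    (hbern : ∀ (n : ℕ) (w : ℕ → G),
      ℙ {ω | ∀ i < n, ω i = w i} = ENNReal.ofReal (∏ i ∈ Finset.range n, p (w i)))
    {N : ℕ} (hN : 0 < N) (s : G) (m : ℕ) :
    (ℙ.map (windowSum N) {ω | ∀ i < m + 1, ω i = s}).toReal
      = ∑ a ∈ Finset.univ.filter (fun a : Fin N → G => ∑ j, a j = s),
          ∏ i ∈ Finset.range (m + N), p (per hN a i) := by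
  rw [map_cyl p ℙ hbern hN s m, ENNReal.toReal_sum (fun a _ => ENNReal.ofReal_ne_top)]
  exact Finset.sum_congr rfl fun a _ =>
    ENNReal.toReal_ofReal (Finset.prod_nonneg fun i _ => hp _)

set_option linter.unusedSectionVars false

/-- The word with `r` at one position and `h` elsewhere. -/
def rot (h r : G) {N : ℕ} (j : Fin N) : Fin N → G := fun i => if i = j then r else h

lemma rot_inj {h r : G} (hr : r ≠ h) {N : ℕ} : Function.Injective (rot h r (N := N)) := by
  intro j j' hjj'
  by_contra hne
  have := congrFun hjj' j
  simp only [rot, if_pos rfl] at this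
  rw [if_neg hne] at this
  exact hr this

lemma sum_rot [Fintype G] [DecidableEq G] (h r : G) {N : ℕ} (hN : 0 < N) (j : Fin N) :
    ∑ i : Fin N, rot h r j i = (N - 1) • h + r := by
  unfold rot
  have hsplit : ∀ i : Fin N, (if i = j then r else h) = (if i = j then r - h else 0) + h := by
    intro i; split <;> abel
  simp_rw [hsplit]
  rw [Finset.sum_add_distrib, Finset.sum_ite_eq' Finset.univ j (fun _ => r - h),
    if_pos (Finset.mem_univ j), Finset.sum_const, Finset.card_univ, Fintype.card_fin]
  rw [show N = (N - 1) + 1 by omega, succ_nsmul]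
  abel

lemma prod_rot [Fintype G] [DecidableEq G] (p : G → ℝ) (h r : G) {N : ℕ} (j : Fin N) :
    ∏ i : Fin N, p (rot h r j i) = p h ^ (N - 1) * p r := by
  unfold rot
  simp_rw [apply_ite p]
  rw [← Finset.mul_prod_erase Finset.univ _ (Finset.mem_univ j), if_pos rfl]
  rw [Finset.prod_congr rfl (fun i hi => if_neg (Finset.ne_of_mem_erase hi))]
  rw [Finset.prod_const, Finset.card_erase_of_mem (Finset.mem_univ j), Finset.card_univ,
    Fintype.card_fin, mul_comm]

lemma key_lt [Fintype G] [DecidableEq G] (p : G → ℝ) (hp : ∀ g, 0 < p g) (h r : G) (hr : r ≠ h)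
    (hh : ∀ g, g ≠ h → p g < p h) (hrmax : ∀ g, g ≠ h → p g ≤ p r)
    {N : ℕ} (hN : 0 < N) (s : G) (hs : s = (N - 1) • h + r)
    (a : Fin N → G) (haS : ∑ j, a j = s)
    (haR : a ∉ Finset.image (rot h r) (Finset.univ : Finset (Fin N))) :
    ∏ j : Fin N, p (a j) < p h ^ (N - 1) * p r := by
  classical
  set T := Finset.univ.filter (fun i : Fin N => a i ≠ h) with hT
  have hmemT : ∀ i, i ∈ T ↔ a i ≠ h := by
    intro i; simp [hT]
  have hTN : T.card ≤ N := le_trans (Finset.card_le_univ T) (by simp)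
  rcases Nat.lt_or_ge T.card 2 with hc | hc
  · exfalso
    rcases (by omega : T.card = 0 ∨ T.card = 1) with h0 | h1
    · -- all entries h
      have hall : ∀ i, a i = h := by
        intro i
        by_contra hne
        have : i ∈ T := (hmemT i).mpr hne
        simp [Finset.card_eq_zero.mp h0] at this
      have hNh : N • h = (N - 1) • h + h := by
        conv_lhs => rw [show N = (N - 1) + 1 by omega]
        rw [succ_nsmul]
      have hkey : (N - 1) • h + r = (N - 1) • h + h := by
        rw [← hNh, ← hs, ← haS,
          Finset.sum_congr rfl (fun i _ => hall i), Finset.sum_const, Finset.card_univ,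
          Fintype.card_fin]
      exact hr (add_left_cancel hkey)
    · obtain ⟨j, hj⟩ := Finset.card_eq_one.mp h1
      have hne : ∀ i, i ≠ j → a i = h := by
        intro i hij
        by_contra hcon
        have : i ∈ T := (hmemT i).mpr hcon
        rw [hj] at this
        exact hij (Finset.mem_singleton.mp this)
      have hsum2 : a j + ∑ i ∈ Finset.univ.erase j, a i = s := by
        rw [Finset.add_sum_erase Finset.univ a (Finset.mem_univ j)]; exact haS
      have herase : ∑ i ∈ Finset.univ.erase j, a i = (N - 1) • h := by
        rw [Finset.sum_congr rfl (fun i hi => hne i (Finset.ne_of_mem_erase hi)),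
          Finset.sum_const, Finset.card_erase_of_mem (Finset.mem_univ j), Finset.card_univ,
          Fintype.card_fin]
      rw [herase, hs] at hsum2
      have haj : a j = r := by
        have : a j + (N-1) • h = r + (N-1) • h := by rw [hsum2]; abel
        exact add_right_cancel this
      apply haR
      refine Finset.mem_image.mpr ⟨j, Finset.mem_univ j, ?_⟩
      funext i
      by_cases hij : i = j
      · subst hij; simp [rot, haj]
      · simp [rot, if_neg hij, hne i hij]
  · -- at least two non-h entries
    have hsplit : ∏ j : Fin N, p (a j) = (∏ j ∈ T, p (a j)) * ∏ j ∈ Tᶜ, p (a j) :=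
      (Finset.prod_mul_prod_compl T _).symm
    have h2 : ∏ j ∈ Tᶜ, p (a j) = p h ^ (N - T.card) := by
      rw [Finset.prod_congr rfl (fun i hi => by
        have : ¬ a i ≠ h := by
          have := Finset.mem_compl.mp hi
          simpa [hmemT] using this
        rw [not_not.mp this]), Finset.prod_const, Finset.card_compl, Fintype.card_fin]
    have h1 : ∏ j ∈ T, p (a j) ≤ p r ^ T.card := by
      calc ∏ j ∈ T, p (a j) ≤ ∏ j ∈ T, p r :=
            Finset.prod_le_prod (fun i _ => (hp _).le)
              (fun i hi => hrmax _ ((hmemT i).mp hi))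
        _ = p r ^ T.card := Finset.prod_const _
    have hstep : p r ^ T.card * p h ^ (N - T.card) < p h ^ (N - 1) * p r := by
      have hk1 : p r ^ (T.card - 1) < p h ^ (T.card - 1) :=
        pow_lt_pow_left₀ (hh r hr) (hp r).le (by omega)
      have e1 : p r ^ T.card = p r * p r ^ (T.card - 1) := by
        rw [← pow_succ']; congr 1; omega
      have e2 : p h ^ (T.card - 1) * p h ^ (N - T.card) = p h ^ (N - 1) := by
        rw [← pow_add]; congr 1; omega
      calc p r ^ T.card * p h ^ (N - T.card)
          = p r * (p r ^ (T.card - 1) * p h ^ (N - T.card)) := by rw [e1]; ring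
        _ < p r * (p h ^ (T.card - 1) * p h ^ (N - T.card)) := by
            apply mul_lt_mul_of_pos_left _ (hp r)
            exact mul_lt_mul_of_pos_right hk1 (pow_pos (hp h) _)
        _ = p h ^ (N - 1) * p r := by rw [e2]; ring
    calc ∏ j : Fin N, p (a j) = (∏ j ∈ T, p (a j)) * ∏ j ∈ Tᶜ, p (a j) := hsplit
      _ ≤ p r ^ T.card * p h ^ (N - T.card) := by
          rw [h2]
          exact mul_le_mul_of_nonneg_right h1 (pow_nonneg (hp h).le _)
      _ < p h ^ (N - 1) * p r := hstep

lemma tendsto_sum_pow {ι : Type*} [DecidableEq ι] (S Rot : Finset ι) (hRS : Rot ⊆ S)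
    (x v : ι → ℝ) (hx0 : ∀ a ∈ S, 0 ≤ x a) (hx1 : ∀ a ∈ S, a ∉ Rot → x a < 1)
    (hxR : ∀ a ∈ Rot, x a = 1) :
    Filter.Tendsto (fun k : ℕ => ∑ a ∈ S, x a ^ (k + 1) * v a) atTop
      (𝓝 (∑ a ∈ Rot, v a)) := by
  have hrw : ∑ a ∈ Rot, v a = ∑ a ∈ S, (if a ∈ Rot then v a else 0) := by
    rw [Finset.sum_ite_mem, Finset.inter_eq_right.mpr hRS]
  rw [hrw]
  refine tendsto_finset_sum _ (fun a ha => ?_)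
  by_cases haR : a ∈ Rot
  · simp only [if_pos haR, hxR a haR, one_pow, one_mul]
    exact tendsto_const_nhds
  · simp only [if_neg haR]
    have h1 := tendsto_pow_atTop_nhds_zero_of_lt_one (hx0 a ha) (hx1 a ha haR)
    have h2 : Filter.Tendsto (fun k : ℕ => x a ^ (k + 1)) atTop (𝓝 0) :=
      h1.comp (tendsto_add_atTop_nat 1)
    simpa using h2.mul_const (v a)

lemma quot_scale (A B c : ℝ) (hc : c ≠ 0) : A / B = (A / c) / (B / c) := by
  rcases eq_or_ne B 0 with hB | hB
  · simp [hB]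
  · field_simp

lemma sum_ite_fin {N : ℕ} (x : Fin N) (u w : ℝ) :
    ∑ j : Fin N, (if x = j then u else w) = u + ((N : ℝ) - 1) * w := by
  have hsplit : ∀ j : Fin N, (if x = j then u else w) = (if x = j then u - w else 0) + w :=
    fun j => by split <;> ring
  simp_rw [hsplit]
  rw [Finset.sum_add_distrib, Finset.sum_ite_eq Finset.univ x (fun _ => u - w),
    if_pos (Finset.mem_univ x), Finset.sum_const, Finset.card_univ, Fintype.card_fin,
    nsmul_eq_mul]
  ring

end WS

/-- nonconvergence of `ℙ₀([s^{n+1}] | [s^n])` for `s = (N−1)·h + r`,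
where `h` is the unique maximizer of `p` and `r` maximizes `p` on `G ∖ {h}`:
the conditional probabilities converge along `n + N − 1 ≡ 0 (mod N)` to
`(p_r + (N−1)p_h)/N`, along `n + N − 1 ≡ N−1 (mod N)` to `N p_h p_r /((N−1)p_r + p_h)`,
these two values are distinct, and the full limit does not exist. -/
theorem windowSum_conditional_nonconvergence {G : Type*} [AddCommGroup G] [Fintype G]
    [MeasurableSpace G] [MeasurableSingletonClass G]
    (p : G → ℝ) (hp : ∀ g, p g ∈ Set.Ioo (0 : ℝ) 1) (hsum : ∑ g, p g = 1)
    (h r : G) (hh : ∀ g, g ≠ h → p g < p h) (hr : r ≠ h)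
    (hrmax : ∀ g, g ≠ h → p g ≤ p r)
    (ℙ : Measure (ℕ → G)) [IsProbabilityMeasure ℙ]
    (hbern : ∀ (n : ℕ) (w : ℕ → G),
      ℙ {ω | ∀ i < n, ω i = w i} = ENNReal.ofReal (∏ i ∈ Finset.range n, p (w i)))
    (N : ℕ) (hN : 2 ≤ N)
    (s : G) (hs : s = (N - 1) • h + r)
    (ratio : ℕ → ℝ)
    (hratio : ∀ n, ratio n =
      (ℙ.map (windowSum N) {ω | ∀ i < n + 1, ω i = s}).toReal /
        (ℙ.map (windowSum N) {ω | ∀ i < n, ω i = s}).toReal) :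
    Tendsto (fun k => ratio (k * N + 1)) atTop
        (𝓝 ((p r + ((N : ℝ) - 1) * p h) / N)) ∧
    Tendsto (fun k => ratio ((k + 1) * N)) atTop
        (𝓝 ((N : ℝ) * p h * p r / (((N : ℝ) - 1) * p r + p h))) ∧
    (p r + ((N : ℝ) - 1) * p h) / N ≠ (N : ℝ) * p h * p r / (((N : ℝ) - 1) * p r + p h) ∧
    ¬ ∃ L : ℝ, Tendsto ratio atTop (𝓝 L) := by
  classical
  have hN0 : 0 < N := by omega
  have hph : 0 < p h := (hp h).1
  have hpr : 0 < p r := (hp r).1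
  have hprh : p r < p h := hh r hr
  have hNR : (2 : ℝ) ≤ (N : ℝ) := by exact_mod_cast hN
  have hNm1 : (0 : ℝ) < (N : ℝ) - 1 := by linarith
  set c : ℝ := p h ^ (N - 1) * p r with hc
  have hc0 : 0 < c := by positivity
  set S : Finset (Fin N → G) := Finset.univ.filter (fun a => ∑ j, a j = s) with hS
  set Rot : Finset (Fin N → G) := Finset.image (WS.rot h r) Finset.univ with hRotdef
  set P : (Fin N → G) → ℝ := fun a => ∏ j ∈ Finset.range N, p (WS.per hN0 a j) with hP
  set Q : (Fin N → G) → ℝ := fun a => ∏ j ∈ Finset.range (N - 1), p (WS.per hN0 a j) with hQ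
  have hPfin : ∀ a : Fin N → G, P a = ∏ j : Fin N, p (a j) := by
    intro a
    simp only [hP]
    rw [← Fin.prod_univ_eq_prod_range (fun j => p (WS.per hN0 a j)) N]
    exact Finset.prod_congr rfl fun j _ => by rw [WS.per_fin]
  have hPpos : ∀ a, 0 < P a := fun a => by
    rw [hPfin]; exact Finset.prod_pos fun j _ => (hp _).1
  have hProt : ∀ j : Fin N, P (WS.rot h r j) = c := fun j => by
    rw [hPfin, WS.prod_rot p h r j]
  have hRotS : Rot ⊆ S := by
    intro a ha
    rw [hRotdef] at ha
    obtain ⟨j, _, rfl⟩ := Finset.mem_image.mp ha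
    rw [hS]
    simp only [Finset.mem_filter, Finset.mem_univ, true_and]
    rw [WS.sum_rot h r hN0 j, hs]
  have hQP : ∀ a : Fin N → G, P a = Q a * p (WS.per hN0 a (N - 1)) := by
    intro a
    simp only [hP, hQ]
    have hre : Finset.range N = Finset.range ((N - 1) + 1) := by
      congr 1; omega
    rw [hre, Finset.prod_range_succ]
  -- measure identities
  have hμ : ∀ m : ℕ, (ℙ.map (windowSum N) {ω | ∀ i < m + 1, ω i = s}).toReal
      = ∑ a ∈ S, ∏ i ∈ Finset.range (m + N), p (WS.per hN0 a i) := by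
    intro m
    rw [hS]
    exact WS.map_cyl_toReal p (fun g => (hp g).1.le) ℙ hbern hN0 s m
  have hprodm : ∀ (a : Fin N → G) (q t : ℕ), t ≤ N →
      ∏ i ∈ Finset.range (q * N + t), p (WS.per hN0 a i)
        = P a ^ q * ∏ j ∈ Finset.range t, p (WS.per hN0 a j) := by
    intro a q t ht
    have hcg : ∀ i ∈ Finset.range (q * N + t),
        p (WS.per hN0 a i) = (fun j => p (WS.per hN0 a j)) (i % N) := by
      intro i _
      exact (congrArg p (WS.per_mod hN0 a i)).symm
    rw [Finset.prod_congr rfl hcg,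
      WS.prod_periodic (fun j => p (WS.per hN0 a j)) N q t ht]
  have hμA0 : ∀ k : ℕ, (ℙ.map (windowSum N) {ω | ∀ i < k * N + 1, ω i = s}).toReal
      = ∑ a ∈ S, P a ^ (k + 1) * 1 := by
    intro k
    rw [hμ (k * N), show k * N + N = (k + 1) * N + 0 by ring]
    exact Finset.sum_congr rfl fun a _ => by
      rw [hprodm a (k + 1) 0 (by omega), Finset.prod_range_zero]
  have hμA1 : ∀ k : ℕ, (ℙ.map (windowSum N) {ω | ∀ i < k * N + 1 + 1, ω i = s}).toReal
      = ∑ a ∈ S, P a ^ (k + 1) * p (a ⟨0, hN0⟩) := by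
    intro k
    rw [hμ (k * N + 1), show k * N + 1 + N = (k + 1) * N + 1 by ring]
    exact Finset.sum_congr rfl fun a _ => by
      rw [hprodm a (k + 1) 1 (by omega), Finset.prod_range_one, WS.per_small hN0 a 0 hN0]
  have hratioA : ∀ k : ℕ, ratio (k * N + 1)
      = (∑ a ∈ S, P a ^ (k + 1) * p (a ⟨0, hN0⟩)) / (∑ a ∈ S, P a ^ (k + 1) * 1) := by
    intro k
    rw [hratio (k * N + 1), hμA1 k, hμA0 k]
  have hμB0 : ∀ k : ℕ, (ℙ.map (windowSum N) {ω | ∀ i < (k + 1) * N, ω i = s}).toReal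
      = ∑ a ∈ S, P a ^ (k + 1) * Q a := by
    intro k
    rw [show (k + 1) * N = k * N + (N - 1) + 1 by
      have e : (k + 1) * N = k * N + N := by ring
      omega]
    rw [hμ (k * N + (N - 1))]
    rw [show k * N + (N - 1) + N = (k + 1) * N + (N - 1) by
      have e : (k + 1) * N = k * N + N := by ring
      omega]
    exact Finset.sum_congr rfl fun a _ => by
      rw [hprodm a (k + 1) (N - 1) (by omega), hQ]
  have hμB1 : ∀ k : ℕ, (ℙ.map (windowSum N) {ω | ∀ i < (k + 1) * N + 1, ω i = s}).toReal
      = ∑ a ∈ S, P a ^ (k + 1) * P a := by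
    intro k
    rw [hμ ((k + 1) * N), show (k + 1) * N + N = (k + 2) * N + 0 by ring]
    exact Finset.sum_congr rfl fun a _ => by
      rw [hprodm a (k + 2) 0 (by omega), Finset.prod_range_zero, mul_one,
        show k + 2 = (k + 1) + 1 by omega, pow_succ]
  have hratioB : ∀ k : ℕ, ratio ((k + 1) * N)
      = (∑ a ∈ S, P a ^ (k + 1) * P a) / (∑ a ∈ S, P a ^ (k + 1) * Q a) := by
    intro k
    rw [hratio ((k + 1) * N), hμB1 k, hμB0 k]
  -- scaling
  have hscale : ∀ (v : (Fin N → G) → ℝ) (k : ℕ),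
      (∑ a ∈ S, P a ^ (k + 1) * v a) / c ^ (k + 1)
        = ∑ a ∈ S, (P a / c) ^ (k + 1) * v a := by
    intro v k
    rw [Finset.sum_div]
    exact Finset.sum_congr rfl fun a _ => by rw [div_pow, div_mul_eq_mul_div]
  have htend : ∀ v : (Fin N → G) → ℝ,
      Tendsto (fun k : ℕ => ∑ a ∈ S, (P a / c) ^ (k + 1) * v a) atTop
        (𝓝 (∑ a ∈ Rot, v a)) := by
    intro v
    apply WS.tendsto_sum_pow S Rot hRotS _ v
    · intro a _
      exact div_nonneg (hPpos a).le hc0.le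
    · intro a ha haR
      rw [div_lt_one hc0]
      rw [hS] at ha
      have haS : ∑ j, a j = s := (Finset.mem_filter.mp ha).2
      rw [hRotdef] at haR
      rw [hPfin a, hc]
      exact WS.key_lt p (fun g => (hp g).1) h r hr hh hrmax hN0 s hs a haS haR
    · intro a haR
      rw [hRotdef] at haR
      obtain ⟨j, _, rfl⟩ := Finset.mem_image.mp haR
      rw [hProt j]
      exact div_self hc0.ne'
  have hsumRot : ∀ v : (Fin N → G) → ℝ,
      ∑ a ∈ Rot, v a = ∑ j : Fin N, v (WS.rot h r j) := by
    intro v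
    rw [hRotdef]
    exact Finset.sum_image (fun x _ y _ hxy => WS.rot_inj hr hxy)
  -- values of the limits
  have LA1 : ∑ a ∈ Rot, p (a ⟨0, hN0⟩) = p r + ((N : ℝ) - 1) * p h := by
    rw [hsumRot (fun a => p (a ⟨0, hN0⟩))]
    have : ∀ j : Fin N, p (WS.rot h r j ⟨0, hN0⟩)
        = if (⟨0, hN0⟩ : Fin N) = j then p r else p h := by
      intro j
      unfold WS.rot
      rw [apply_ite p]
    rw [Finset.sum_congr rfl (fun j _ => this j), WS.sum_ite_fin]
  have LA2 : ∑ a ∈ Rot, (1 : ℝ) = (N : ℝ) := by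
    have hcard : Rot.card = N := by
      rw [hRotdef, Finset.card_image_of_injective _ (WS.rot_inj hr), Finset.card_univ,
        Fintype.card_fin]
    rw [Finset.sum_const, hcard, nsmul_eq_mul, mul_one]
  have LB1 : ∑ a ∈ Rot, P a = (N : ℝ) * c := by
    rw [hsumRot P, Finset.sum_congr rfl (fun j _ => hProt j), Finset.sum_const,
      Finset.card_univ, Fintype.card_fin, nsmul_eq_mul]
  have LB2 : ∑ a ∈ Rot, Q a = c / p r + ((N : ℝ) - 1) * (c / p h) := by
    rw [hsumRot Q]
    have hQrot : ∀ j : Fin N, Q (WS.rot h r j)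
        = if (⟨N - 1, by omega⟩ : Fin N) = j then c / p r else c / p h := by
      intro j
      have hQP' := (hQP (WS.rot h r j)).symm
      rw [hProt j] at hQP'
      have hper : WS.per hN0 (WS.rot h r j) (N - 1) = WS.rot h r j ⟨N - 1, by omega⟩ :=
        WS.per_small hN0 _ (N - 1) (by omega)
      rw [hper] at hQP'
      by_cases hij : (⟨N - 1, by omega⟩ : Fin N) = j
      · rw [if_pos hij]
        have hrv : WS.rot h r j ⟨N - 1, by omega⟩ = r := by
          unfold WS.rot; rw [if_pos hij]
        rw [hrv] at hQP'
        exact (eq_div_iff hpr.ne').mpr hQP'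
      · rw [if_neg hij]
        have hrv : WS.rot h r j ⟨N - 1, by omega⟩ = h := by
          unfold WS.rot; rw [if_neg hij]
        rw [hrv] at hQP'
        exact (eq_div_iff hph.ne').mpr hQP'
    rw [Finset.sum_congr rfl (fun j _ => hQrot j), WS.sum_ite_fin]
  -- case A
  have tendstoA : Tendsto (fun k => ratio (k * N + 1)) atTop
      (𝓝 ((p r + ((N : ℝ) - 1) * p h) / N)) := by
    have hfun : (fun k : ℕ => ratio (k * N + 1))
        = fun k => (∑ a ∈ S, (P a / c) ^ (k + 1) * p (a ⟨0, hN0⟩))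
            / (∑ a ∈ S, (P a / c) ^ (k + 1) * 1) := by
      funext k
      rw [hratioA k,
        WS.quot_scale _ _ (c ^ (k + 1)) (by positivity),
        hscale (fun a => p (a ⟨0, hN0⟩)) k, hscale (fun _ => 1) k]
    rw [hfun]
    have hne : (∑ a ∈ Rot, (1 : ℝ)) ≠ 0 := by
      rw [LA2]
      exact ne_of_gt (by linarith)
    have := (htend (fun a => p (a ⟨0, hN0⟩))).div (htend (fun _ => 1)) hne
    rw [LA1, LA2] at this
    exact this
  -- case B
  have hden1 : (0 : ℝ) < c / p r + ((N : ℝ) - 1) * (c / p h) :=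
    add_pos (div_pos hc0 hpr) (mul_pos hNm1 (div_pos hc0 hph))
  have hden2 : (0 : ℝ) < ((N : ℝ) - 1) * p r + p h := add_pos (mul_pos hNm1 hpr) hph
  have tendstoB : Tendsto (fun k => ratio ((k + 1) * N)) atTop
      (𝓝 ((N : ℝ) * p h * p r / (((N : ℝ) - 1) * p r + p h))) := by
    have hfun : (fun k : ℕ => ratio ((k + 1) * N))
        = fun k => (∑ a ∈ S, (P a / c) ^ (k + 1) * P a)
            / (∑ a ∈ S, (P a / c) ^ (k + 1) * Q a) := by
      funext k
      rw [hratioB k,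
        WS.quot_scale _ _ (c ^ (k + 1)) (by positivity),
        hscale P k, hscale Q k]
    rw [hfun]
    have hne : (∑ a ∈ Rot, Q a) ≠ 0 := by
      rw [LB2]
      exact hden1.ne'
    have hlim := (htend P).div (htend Q) hne
    rw [LB1, LB2] at hlim
    have hval : (N : ℝ) * c / (c / p r + ((N : ℝ) - 1) * (c / p h))
        = (N : ℝ) * p h * p r / (((N : ℝ) - 1) * p r + p h) := by
      rw [div_eq_div_iff hden1.ne' hden2.ne']
      field_simp
      ring
    rw [hval] at hlim
    exact hlim
  -- distinctness
  have hdistinct : (p r + ((N : ℝ) - 1) * p h) / N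
      ≠ (N : ℝ) * p h * p r / (((N : ℝ) - 1) * p r + p h) := by
    intro heq
    have hd1 : (0 : ℝ) < (N : ℝ) := by linarith
    rw [div_eq_div_iff hd1.ne' hden2.ne'] at heq
    nlinarith [mul_pos hNm1 (mul_pos (sub_pos.mpr hprh) (sub_pos.mpr hprh))]
  refine ⟨tendstoA, tendstoB, hdistinct, ?_⟩
  rintro ⟨L, hL⟩
  have hsub1 : Tendsto (fun k : ℕ => k * N + 1) atTop atTop :=
    tendsto_atTop_mono (fun k => by
      simp only [id_eq]
      have := Nat.le_mul_of_pos_right k hN0; omega) tendsto_id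
  have hsub2 : Tendsto (fun k : ℕ => (k + 1) * N) atTop atTop :=
    tendsto_atTop_mono (fun k => by
      simp only [id_eq]
      have := Nat.le_mul_of_pos_right (k + 1) hN0; omega) tendsto_id
  have e1 := tendsto_nhds_unique (hL.comp hsub1) tendstoA
  have e2 := tendsto_nhds_unique (hL.comp hsub2) tendstoB
  exact hdistinct (e1.symm.trans e2 ▸ rfl)
end

section
/- Let ℙ be the Bernoulli measure on Ω = (ℕ₊)^ℕ with marginals ℙ{ω_0 = a} = 2^{-a}. For fixed b_0,...,b_{n-1} ∈ {0,1}, let D = {ω : θ(ω_j, ω_{j+1}) = b_j for 0 ≤ j < n} where θ(a₁,a₂) = 1 iff a₂ = a₁+1. Then for all integers 1 ≤ r < k ≤ s: ℙ({ω_0 = s} ∩ D) ≤ ℙ({ω_0 = r} ∩ D) + ℙ({ω_0 = k} ∩ D). -/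
open MeasureTheory
open scoped BigOperators

instance : MeasurableSpace ℕ+ := ⊤

instance : MeasurableSingletonClass ℕ+ :=
  ⟨fun _ => MeasurableSpace.measurableSet_top⟩

/-- `θ(a₁, a₂) = 1` iff `a₂ = a₁ + 1`. -/
def theta (a₁ a₂ : ℕ+) : Bool := a₂ = a₁ + 1

namespace BII

lemma theta_true (a c : ℕ+) : theta a c = true ↔ c = a + 1 := by
  simp [theta]

lemma theta_false (a c : ℕ+) : theta a c = false ↔ ¬ (c = a + 1) := by
  simp [theta]

/-- admissibility of the tuple `(a, u)` with respect to the pattern `b`. -/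
def adm (m : ℕ) (b : ℕ → Bool) (a : ℕ+) (u : Fin m → ℕ+) : Prop :=
  ∀ j : Fin m, theta ((Fin.cons a u : Fin (m + 1) → ℕ+) j.castSucc)
    ((Fin.cons a u : Fin (m + 1) → ℕ+) j.succ) = b (j : ℕ)

instance (m : ℕ) (b : ℕ → Bool) (a : ℕ+) (u : Fin m → ℕ+) : Decidable (adm m b a u) := by
  unfold adm; infer_instance

noncomputable def U (m : ℕ) (b : ℕ → Bool) (a : ℕ+) : ENNReal :=
  ∑' u : Fin m → ℕ+, if adm m b a u then ∏ i, (2 : ENNReal)⁻¹ ^ (u i : ℕ) else 0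

noncomputable def g : ℕ → (ℕ → Bool) → ℕ+ → ENNReal
  | 0, _, a => (2 : ENNReal)⁻¹ ^ (a : ℕ)
  | (m + 1), b, a => (2 : ENNReal)⁻¹ ^ (a : ℕ) *
      ∑' c : ℕ+, if theta a c = b 0 then g m (fun i => b (i + 1)) c else 0

lemma U_zero (b : ℕ → Bool) (a : ℕ+) : U 0 b a = 1 := by
  unfold U
  have h1 : ∀ u : Fin 0 → ℕ+,
      (if adm 0 b a u then ∏ i, (2 : ENNReal)⁻¹ ^ (u i : ℕ) else 0) = 1 := by
    intro u
    rw [if_pos (show adm 0 b a u from fun j => j.elim0)]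
    simp
  rw [tsum_congr h1]
  exact tsum_eq_single default fun x hx => absurd (Subsingleton.elim x default) hx

lemma adm_cons (m : ℕ) (b : ℕ → Bool) (a c : ℕ+) (u : Fin m → ℕ+) :
    adm (m + 1) b a (Fin.cons c u) ↔
      theta a c = b 0 ∧ adm m (fun i => b (i + 1)) c u := by
  unfold adm
  rw [Fin.forall_fin_succ]
  constructor
  · rintro ⟨h0, h⟩
    refine ⟨by simpa using h0, fun j => ?_⟩
    have := h j
    rwa [← Fin.succ_castSucc, Fin.cons_succ, Fin.cons_succ, Fin.cons_succ] at this
  · rintro ⟨h0, h⟩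
    refine ⟨by simpa using h0, fun j => ?_⟩
    rw [← Fin.succ_castSucc, Fin.cons_succ, Fin.cons_succ, Fin.cons_succ]
    exact h j

lemma U_succ (m : ℕ) (b : ℕ → Bool) (a : ℕ+) :
    U (m + 1) b a = ∑' c : ℕ+,
      if theta a c = b 0 then (2 : ENNReal)⁻¹ ^ (c : ℕ) * U m (fun i => b (i + 1)) c else 0 := by
  unfold U
  rw [← (Fin.consEquiv (fun _ : Fin (m + 1) => ℕ+)).tsum_eq, ENNReal.tsum_prod']
  refine tsum_congr fun c => ?_
  have key : ∀ u : Fin m → ℕ+,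
      (if adm (m + 1) b a (Fin.cons c u) then
          ∏ i, (2 : ENNReal)⁻¹ ^ ((Fin.cons c u : Fin (m + 1) → ℕ+) i : ℕ) else 0)
        = if theta a c = b 0 then
            (if adm m (fun i => b (i + 1)) c u then
              (2 : ENNReal)⁻¹ ^ (c : ℕ) * ∏ i, (2 : ENNReal)⁻¹ ^ (u i : ℕ) else 0) else 0 := by
    intro u
    by_cases h1 : theta a c = b 0
    · by_cases h2 : adm m (fun i => b (i + 1)) c u
      · rw [if_pos ((adm_cons m b a c u).mpr ⟨h1, h2⟩), if_pos h1, if_pos h2,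
          Fin.prod_univ_succ]
        simp
      · rw [if_neg (fun hc => h2 (((adm_cons m b a c u).mp hc).2)), if_pos h1, if_neg h2]
    · rw [if_neg (fun hc => h1 (((adm_cons m b a c u).mp hc).1)), if_neg h1]
  calc (∑' u : Fin m → ℕ+,
        if adm (m + 1) b a ((Fin.consEquiv fun _ => ℕ+) (c, u)) then
          ∏ i, (2 : ENNReal)⁻¹ ^ (((Fin.consEquiv fun _ => ℕ+) (c, u)) i : ℕ) else 0)
      = ∑' u : Fin m → ℕ+,
        if theta a c = b 0 then
          (if adm m (fun i => b (i + 1)) c u then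
            (2 : ENNReal)⁻¹ ^ (c : ℕ) * ∏ i, (2 : ENNReal)⁻¹ ^ (u i : ℕ) else 0) else 0 :=
        tsum_congr fun u => key u
    _ = if theta a c = b 0 then
          (2 : ENNReal)⁻¹ ^ (c : ℕ) * U m (fun i => b (i + 1)) c else 0 := by
        by_cases hθ : theta a c = b 0
        · simp only [if_pos hθ, U, ← ENNReal.tsum_mul_left]
          exact tsum_congr fun u => by rw [mul_ite, mul_zero]
        · simp [hθ]

lemma g_eq_U : ∀ (m : ℕ) (b : ℕ → Bool) (a : ℕ+),
    g m b a = (2 : ENNReal)⁻¹ ^ (a : ℕ) * U m b a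
  | 0, b, a => by rw [U_zero]; simp [g]
  | (m + 1), b, a => by
      rw [g, U_succ]
      congr 1
      refine tsum_congr fun c => ?_
      by_cases hθ : theta a c = b 0 <;> simp [hθ, g_eq_U m]

lemma inv_two_le_one : (2 : ENNReal)⁻¹ ≤ 1 :=
  ENNReal.inv_le_one.2 ENNReal.one_lt_two.le

lemma pow_anti {x y : ℕ+} (h : x ≤ y) :
    (2 : ENNReal)⁻¹ ^ (y : ℕ) ≤ (2 : ENNReal)⁻¹ ^ (x : ℕ) :=
  pow_le_pow_right_of_le_one' inv_two_le_one ((PNat.coe_le_coe x y).mpr h)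

lemma succ_ne_succ {x y : ℕ+} (h : x ≠ y) : x + 1 ≠ y + 1 := by
  intro hc
  apply h
  have : ((x + 1 : ℕ+) : ℕ) = ((y + 1 : ℕ+) : ℕ) := by rw [hc]
  apply PNat.coe_injective
  simpa using this

lemma g_ineq : ∀ (m : ℕ) (b : ℕ → Bool) (r k s : ℕ+), r < k → k ≤ s →
    g m b s ≤ g m b r + g m b k
  | 0, b, r, k, s, _, hks => by
      simp only [g]
      calc (2 : ENNReal)⁻¹ ^ (s : ℕ) ≤ (2 : ENNReal)⁻¹ ^ (k : ℕ) := pow_anti hks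
        _ ≤ _ := le_add_self
  | (m + 1), b, r, k, s, hrk, hks => by
      cases hb : b 0 with
      | true =>
          have hsum : ∀ a : ℕ+,
              (∑' c : ℕ+, if theta a c = b 0 then g m (fun i => b (i + 1)) c else 0)
                = g m (fun i => b (i + 1)) (a + 1) := by
            intro a
            rw [hb]
            have h1 : ∀ c : ℕ+, (if theta a c = true then g m (fun i => b (i + 1)) c else 0)
                = if c = a + 1 then g m (fun i => b (i + 1)) (a + 1) else 0 := by
              intro c
              by_cases hc : c = a + 1
              · subst hc; rw [if_pos ((theta_true a _).mpr rfl), if_pos rfl]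
              · rw [if_neg (fun hth => hc ((theta_true a c).mp hth)), if_neg hc]
            rw [tsum_congr h1, tsum_ite_eq]
          simp only [g, hsum]
          calc (2 : ENNReal)⁻¹ ^ (s : ℕ) * g m (fun i => b (i + 1)) (s + 1)
              ≤ (2 : ENNReal)⁻¹ ^ (s : ℕ) *
                  (g m (fun i => b (i + 1)) (r + 1) + g m (fun i => b (i + 1)) (k + 1)) :=
                mul_le_mul_right
                  (g_ineq m _ (r + 1) (k + 1) (s + 1) (add_lt_add_left hrk 1)
                    (add_le_add_left hks 1)) _
            _ = (2 : ENNReal)⁻¹ ^ (s : ℕ) * g m (fun i => b (i + 1)) (r + 1)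
                  + (2 : ENNReal)⁻¹ ^ (s : ℕ) * g m (fun i => b (i + 1)) (k + 1) := mul_add _ _ _
            _ ≤ (2 : ENNReal)⁻¹ ^ (r : ℕ) * g m (fun i => b (i + 1)) (r + 1)
                  + (2 : ENNReal)⁻¹ ^ (k : ℕ) * g m (fun i => b (i + 1)) (k + 1) :=
                add_le_add (mul_le_mul_left (pow_anti (hrk.le.trans hks)) _)
                  (mul_le_mul_left (pow_anti hks) _)
      | false =>
          have hrw : ∀ a : ℕ+,
              (∑' c : ℕ+, if theta a c = b 0 then g m (fun i => b (i + 1)) c else 0)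
                = ∑' c : ℕ+, if c = a + 1 then 0 else g m (fun i => b (i + 1)) c := by
            intro a
            refine tsum_congr fun c => ?_
            rw [hb]
            by_cases hc : c = a + 1
            · rw [if_pos hc, if_neg]
              rw [theta_false]
              exact fun hth => hth hc
            · rw [if_neg hc, if_pos ((theta_false a c).mpr hc)]
          simp only [g, hrw]
          set b' := fun i => b (i + 1) with hb'
          set S := ∑' c : ℕ+, g m b' c with hS
          have hFle : ∀ a : ℕ+, (∑' c : ℕ+, if c = a + 1 then 0 else g m b' c) ≤ S := by
            intro a
            refine Summable.tsum_le_tsum (fun c => ?_) ENNReal.summable ENNReal.summable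
            split
            · exact zero_le
            · exact le_rfl
          have hsplit : S = g m b' (k + 1) + ∑' c : ℕ+, if c = k + 1 then 0 else g m b' c := by
            have h := ENNReal.tsum_eq_add_tsum_ite (f := fun c : ℕ+ => g m b' c) (k + 1)
            rw [hS]
            convert h using 3
            funext c
            congr
          have hterm : g m b' (k + 1) ≤ ∑' c : ℕ+, if c = r + 1 then 0 else g m b' c := by
            have h2 := ENNReal.le_tsum (f := fun c : ℕ+ => if c = r + 1 then 0 else g m b' c)
              (k + 1)
            rwa [if_neg (succ_ne_succ hrk.ne')] at h2
          calc (2 : ENNReal)⁻¹ ^ (s : ℕ) * (∑' c : ℕ+, if c = s + 1 then 0 else g m b' c)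
              ≤ (2 : ENNReal)⁻¹ ^ (s : ℕ) * S := mul_le_mul_right (hFle s) _
            _ ≤ (2 : ENNReal)⁻¹ ^ (k : ℕ) * S := mul_le_mul_left (pow_anti hks) _
            _ = (2 : ENNReal)⁻¹ ^ (k : ℕ) * g m b' (k + 1)
                  + (2 : ENNReal)⁻¹ ^ (k : ℕ) * (∑' c : ℕ+, if c = k + 1 then 0 else g m b' c) := by
                rw [hsplit, mul_add]
            _ ≤ (2 : ENNReal)⁻¹ ^ (r : ℕ) * (∑' c : ℕ+, if c = r + 1 then 0 else g m b' c)
                  + (2 : ENNReal)⁻¹ ^ (k : ℕ) * (∑' c : ℕ+, if c = k + 1 then 0 else g m b' c) :=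
                add_le_add (mul_le_mul' (pow_anti hrk.le) hterm) le_rfl

lemma measure_event (ℙ : Measure (ℕ → ℕ+))
    (hbern : ∀ (n : ℕ) (w : ℕ → ℕ+),
      ℙ {ω | ∀ i < n, ω i = w i} = ∏ i ∈ Finset.range n, (2 : ENNReal)⁻¹ ^ (w i : ℕ))
    (m : ℕ) (b : ℕ → Bool) (a : ℕ+) :
    ℙ ({ω | ω 0 = a} ∩ {ω | ∀ j < m, theta (ω j) (ω (j + 1)) = b j}) = g m b a := by
  classical
  set Cyl : (Fin m → ℕ+) → Set (ℕ → ℕ+) :=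
    fun u => {ω | ω 0 = a ∧ ∀ i : Fin m, ω ((i : ℕ) + 1) = u i} with hCyl
  -- bridge : an ω in Cyl u agrees with Fin.cons a u on the first m+1 coordinates
  have bridge : ∀ (u : Fin m → ℕ+) (ω : ℕ → ℕ+), ω ∈ Cyl u →
      ∀ i : Fin (m + 1), (Fin.cons a u : Fin (m + 1) → ℕ+) i = ω (i : ℕ) := by
    rintro u ω ⟨h0, hu⟩ i
    refine Fin.cases ?_ ?_ i
    · simpa using h0.symm
    · intro t
      simpa using (hu t).symm
  have admiff : ∀ (u : Fin m → ℕ+) (ω : ℕ → ℕ+), ω ∈ Cyl u →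
      (adm m b a u ↔ ∀ j < m, theta (ω j) (ω (j + 1)) = b j) := by
    intro u ω hω
    constructor
    · intro hadm j hj
      have h1 := hadm ⟨j, hj⟩
      rw [bridge u ω hω, bridge u ω hω] at h1
      simpa using h1
    · intro h j
      rw [bridge u ω hω, bridge u ω hω]
      have h1 := h (j : ℕ) j.isLt
      simpa using h1
  have hCylMeas : ∀ u, MeasurableSet (Cyl u) := by
    intro u
    have : Cyl u = (fun ω : ℕ → ℕ+ => ω 0) ⁻¹' {a} ∩
        ⋂ i : Fin m, (fun ω : ℕ → ℕ+ => ω ((i : ℕ) + 1)) ⁻¹' {u i} := by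
      ext ω
      simp [hCyl, Set.mem_iInter]
    rw [this]
    exact ((measurable_pi_apply 0) (measurableSet_singleton a)).inter
      (MeasurableSet.iInter fun i =>
        (measurable_pi_apply _) (measurableSet_singleton (u i)))
  have hCylMeasure : ∀ u, ℙ (Cyl u)
      = (2 : ENNReal)⁻¹ ^ (a : ℕ) * ∏ i, (2 : ENNReal)⁻¹ ^ (u i : ℕ) := by
    intro u
    set w : ℕ → ℕ+ := fun i => if h : i < m + 1 then (Fin.cons a u : Fin (m + 1) → ℕ+) ⟨i, h⟩ else 1 with hw
    have hset : {ω | ∀ i < m + 1, ω i = w i} = Cyl u := by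
      ext ω
      constructor
      · intro h
        constructor
        · have h0 := h 0 (Nat.succ_pos m)
          simpa [hw] using h0
        · intro i
          have hi := h ((i : ℕ) + 1) (by omega)
          have : w ((i : ℕ) + 1) = u i := by
            simp only [hw]
            have hlt : (i : ℕ) + 1 < m + 1 := by omega
            rw [dif_pos hlt]
            have : (⟨(i : ℕ) + 1, hlt⟩ : Fin (m + 1)) = Fin.succ ⟨(i : ℕ), i.isLt⟩ := rfl
            rw [this, Fin.cons_succ, Fin.eta]
          rw [← this]
          exact hi
      · rintro ⟨h0, hu⟩ i hi
        match i, hi with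
        | 0, hi => simpa [hw] using h0
        | (t + 1), hi =>
          have htm : t < m := by omega
          have h1 := hu ⟨t, htm⟩
          have : w (t + 1) = u ⟨t, htm⟩ := by
            simp only [hw]
            rw [dif_pos hi]
            have : (⟨t + 1, hi⟩ : Fin (m + 1)) = Fin.succ ⟨t, htm⟩ := rfl
            rw [this, Fin.cons_succ]
          rw [this]
          exact h1
    have hkey := hbern (m + 1) w
    rw [hset] at hkey
    rw [hkey, ← Fin.prod_univ_eq_prod_range]
    have hwf : ∀ i : Fin (m + 1), w (i : ℕ) = (Fin.cons a u : Fin (m + 1) → ℕ+) i := by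
      intro i
      simp only [hw]
      rw [dif_pos i.isLt, Fin.eta]
    calc (∏ i : Fin (m + 1), (2 : ENNReal)⁻¹ ^ (w (i : ℕ) : ℕ))
        = ∏ i : Fin (m + 1), (2 : ENNReal)⁻¹ ^ ((Fin.cons a u : Fin (m + 1) → ℕ+) i : ℕ) :=
          Finset.prod_congr rfl fun i _ => by rw [hwf i]
      _ = (2 : ENNReal)⁻¹ ^ (a : ℕ) * ∏ i, (2 : ENNReal)⁻¹ ^ (u i : ℕ) := by
          rw [Fin.prod_univ_succ]
          simp
  have hunion : {ω : ℕ → ℕ+ | ω 0 = a} ∩ {ω | ∀ j < m, theta (ω j) (ω (j + 1)) = b j}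
      = ⋃ u : Fin m → ℕ+, if adm m b a u then Cyl u else ∅ := by
    ext ω
    simp only [Set.mem_inter_iff, Set.mem_setOf_eq, Set.mem_iUnion]
    constructor
    · rintro ⟨h0, hp⟩
      refine ⟨fun i => ω ((i : ℕ) + 1), ?_⟩
      have hmem : ω ∈ Cyl (fun i => ω ((i : ℕ) + 1)) := ⟨h0, fun i => rfl⟩
      rw [if_pos ((admiff _ ω hmem).mpr hp)]
      exact hmem
    · rintro ⟨u, hu⟩
      by_cases hadm : adm m b a u
      · rw [if_pos hadm] at hu
        exact ⟨hu.1, (admiff u ω hu).mp hadm⟩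
      · rw [if_neg hadm] at hu
        exact absurd hu (Set.notMem_empty ω)
  have hdisj : Pairwise (Function.onFun Disjoint
      fun u => if adm m b a u then Cyl u else ∅) := by
    intro u v huv
    show Disjoint (if adm m b a u then Cyl u else ∅) (if adm m b a v then Cyl v else ∅)
    by_cases hu : adm m b a u
    · by_cases hv : adm m b a v
      · rw [if_pos hu, if_pos hv]
        refine Set.disjoint_left.mpr fun ω hωu hωv => ?_
        apply huv
        funext i
        rw [← hωu.2 i, ← hωv.2 i]
      · rw [if_neg hv]; exact disjoint_bot_right
    · rw [if_neg hu]; exact disjoint_bot_left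
  have hmeas : ∀ u : Fin m → ℕ+, MeasurableSet (if adm m b a u then Cyl u else ∅) := by
    intro u
    split
    · exact hCylMeas u
    · exact MeasurableSet.empty
  rw [hunion, measure_iUnion hdisj hmeas, g_eq_U]
  have : ∀ u : Fin m → ℕ+, ℙ (if adm m b a u then Cyl u else ∅)
      = (2 : ENNReal)⁻¹ ^ (a : ℕ) * (if adm m b a u then ∏ i, (2 : ENNReal)⁻¹ ^ (u i : ℕ) else 0)
      := by
    intro u
    by_cases hadm : adm m b a u
    · rw [if_pos hadm, if_pos hadm, hCylMeasure u]
    · rw [if_neg hadm, if_neg hadm, measure_empty, mul_zero]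
  rw [tsum_congr this, ENNReal.tsum_mul_left]
  rfl

end BII

/-- for the Bernoulli measure `ℙ` on `(ℕ₊)^ℕ` with marginals `2^{-a}`,
the event `D = {ω : θ(ω_j, ω_{j+1}) = b_j for j < n}`, and integers `1 ≤ r < k ≤ s`:
`ℙ({ω_0 = s} ∩ D) ≤ ℙ({ω_0 = r} ∩ D) + ℙ({ω_0 = k} ∩ D)`. -/
theorem bernoulli_increment_inequality
    (ℙ : Measure (ℕ → ℕ+)) [IsProbabilityMeasure ℙ]
    (hbern : ∀ (n : ℕ) (w : ℕ → ℕ+),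
      ℙ {ω | ∀ i < n, ω i = w i} = ∏ i ∈ Finset.range n, (2 : ENNReal)⁻¹ ^ (w i : ℕ))
    (n : ℕ) (b : ℕ → Bool)
    (D : Set (ℕ → ℕ+)) (hD : D = {ω | ∀ j < n, theta (ω j) (ω (j + 1)) = b j})
    (r k s : ℕ+) (hrk : r < k) (hks : k ≤ s) :
    ℙ ({ω | ω 0 = s} ∩ D) ≤ ℙ ({ω | ω 0 = r} ∩ D) + ℙ ({ω | ω 0 = k} ∩ D) := by
  subst hD
  rw [BII.measure_event ℙ hbern n b s, BII.measure_event ℙ hbern n b r,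
    BII.measure_event ℙ hbern n b k]
  exact BII.g_ineq n b r k s hrk hks
end

section
/- With ℙ the Bernoulli measure on (ℕ₊)^ℕ with marginals 2^{-a} and ℙ₀ = ℙ∘Θ^{-1} where (Θω)_j = 1 iff ω_{j+1} = ω_j + 1: for every n ≥ 1, ℙ₀[1^n]₀ = 2^{-n(n+1)/2} · 2^{-(n+1)} / (1 − 2^{-(n+1)}), where [1^n]₀ is the cylinder of n consecutive 1's in {0,1}^ℕ. -/
open MeasureTheory
open scoped BigOperators

/-- `(Θω)_j = θ(ω_j, ω_{j+1})`. -/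
def Theta (ω : ℕ → ℕ+) : ℕ → Bool := fun j => theta (ω j) (ω (j + 1))

/-- Arithmetic progression starting at `k`. -/
def wfun (k : ℕ+) (j : ℕ) : ℕ+ := ⟨(k : ℕ) + j, by positivity⟩

lemma wfun_zero (k : ℕ+) : wfun k 0 = k := by
  apply PNat.coe_injective; simp [wfun]

lemma wfun_succ (k : ℕ+) (j : ℕ) : wfun k (j + 1) = wfun k j + 1 := by
  apply PNat.coe_injective; simp [wfun, PNat.add_coe]; change _ = (k : ℕ) + j + 1; ring

lemma theta_eq_true {a b : ℕ+} : theta a b = true ↔ b = a + 1 := by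
  simp [theta]

lemma preimage_eq (n : ℕ) :
    Theta ⁻¹' {γ | ∀ j < n, γ j = true} =
      ⋃ k : ℕ+, {ω : ℕ → ℕ+ | ∀ j < n + 1, ω j = wfun k j} := by
  ext ω
  simp only [Set.mem_preimage, Set.mem_setOf_eq, Set.mem_iUnion]
  constructor
  · intro h
    refine ⟨ω 0, ?_⟩
    intro j hj
    induction j with
    | zero => simp [wfun_zero]
    | succ i ih =>
      have hi : i < n := Nat.lt_of_succ_lt_succ hj
      have := h i hi
      rw [Theta, theta_eq_true] at this
      rw [this, ih (Nat.lt_of_succ_lt hj), wfun_succ]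
  · rintro ⟨k, hk⟩ j hj
    rw [Theta, theta_eq_true, hk j (Nat.lt_trans hj (Nat.lt_succ_self n)),
      hk (j + 1) (Nat.succ_lt_succ hj), wfun_succ]

/-- with `ℙ₀ = ℙ∘Θ⁻¹` as above, for every `n ≥ 1`,
`ℙ₀[1^n]₀ = 2^{-n(n+1)/2} · 2^{-(n+1)} / (1 − 2^{-(n+1)})`. -/
theorem Theta_pushforward_ones_cylinder
    (ℙ : Measure (ℕ → ℕ+)) [IsProbabilityMeasure ℙ]
    (hbern : ∀ (n : ℕ) (w : ℕ → ℕ+),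
      ℙ {ω | ∀ i < n, ω i = w i} = ∏ i ∈ Finset.range n, (2 : ENNReal)⁻¹ ^ (w i : ℕ))
    (n : ℕ) (hn : 1 ≤ n) :
    ℙ.map Theta {γ | ∀ j < n, γ j = true} =
      (2 : ENNReal)⁻¹ ^ (n * (n + 1) / 2) * (2 : ENNReal)⁻¹ ^ (n + 1) /
        (1 - (2 : ENNReal)⁻¹ ^ (n + 1)) := by
  have hTheta : Measurable Theta := by
    apply measurable_pi_lambda
    intro j
    have : (fun ω : ℕ → ℕ+ => Theta ω j) =
        (fun p : ℕ+ × ℕ+ => theta p.1 p.2) ∘ (fun ω => (ω j, ω (j + 1))) := rfl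
    rw [this]
    exact (measurable_of_countable _).comp
      ((measurable_pi_apply j).prodMk (measurable_pi_apply (j + 1)))
  have hcyl : MeasurableSet {γ : ℕ → Bool | ∀ j < n, γ j = true} := by
    have : {γ : ℕ → Bool | ∀ j < n, γ j = true} =
        ⋂ j ∈ Finset.range n, (fun γ : ℕ → Bool => γ j) ⁻¹' {true} := by
      ext γ; simp
    rw [this]
    exact MeasurableSet.biInter (Finset.range n).countable_toSet
      (fun j _ => (measurable_pi_apply j) (measurableSet_singleton true))
  have hmk : ∀ k : ℕ+, MeasurableSet {ω : ℕ → ℕ+ | ∀ j < n + 1, ω j = wfun k j} := by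
    intro k
    have : {ω : ℕ → ℕ+ | ∀ j < n + 1, ω j = wfun k j} =
        ⋂ j ∈ Finset.range (n + 1), (fun ω : ℕ → ℕ+ => ω j) ⁻¹' {wfun k j} := by
      ext ω; simp
    rw [this]
    exact MeasurableSet.biInter (Finset.range (n + 1)).countable_toSet
      (fun j _ => (measurable_pi_apply j) (measurableSet_singleton _))
  rw [Measure.map_apply hTheta hcyl, preimage_eq]
  have hdisj : Pairwise (Function.onFun Disjoint
      (fun k : ℕ+ => {ω : ℕ → ℕ+ | ∀ j < n + 1, ω j = wfun k j})) := by
    intro k k' hkk'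
    refine Set.disjoint_left.mpr ?_
    intro ω h1 h2
    apply hkk'
    have e1 := h1 0 (Nat.succ_pos n)
    have e2 := h2 0 (Nat.succ_pos n)
    rw [wfun_zero] at e1 e2
    rw [← e1, ← e2]
  rw [measure_iUnion hdisj hmk]
  have hval : ∀ k : ℕ+,
      ℙ {ω : ℕ → ℕ+ | ∀ j < n + 1, ω j = wfun k j} =
        (2 : ENNReal)⁻¹ ^ (n * (n + 1) / 2) * ((2 : ENNReal)⁻¹ ^ (n + 1)) ^ (k : ℕ) := by
    intro k
    rw [hbern (n + 1) (wfun k), Finset.prod_pow_eq_pow_sum]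
    have hsum : ∑ i ∈ Finset.range (n + 1), ((wfun k i : ℕ)) =
        n * (n + 1) / 2 + (n + 1) * (k : ℕ) := by
      have : ∀ i, ((wfun k i : ℕ)) = (k : ℕ) + i := fun i => rfl
      simp only [this]
      rw [Finset.sum_add_distrib, Finset.sum_const, Finset.card_range, smul_eq_mul,
        Finset.sum_range_id, Nat.add_sub_cancel, Nat.mul_comm (n + 1) n]
      omega
    rw [hsum, pow_add, ← pow_mul]
  simp only [hval]
  rw [ENNReal.tsum_mul_left]
  have hgeo : ∑' k : ℕ+, ((2 : ENNReal)⁻¹ ^ (n + 1)) ^ (k : ℕ) =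
      (2 : ENNReal)⁻¹ ^ (n + 1) * (1 - (2 : ENNReal)⁻¹ ^ (n + 1))⁻¹ := by
    set r := (2 : ENNReal)⁻¹ ^ (n + 1) with hr
    have := Equiv.tsum_eq Equiv.pnatEquivNat.symm (fun k : ℕ+ => r ^ (k : ℕ))
    rw [← this]
    simp only [Equiv.pnatEquivNat_symm_apply, Nat.succPNat_coe, Nat.succ_eq_add_one]
    calc ∑' m : ℕ, r ^ (m + 1) = ∑' m : ℕ, r * r ^ m := by
          congr 1; funext m; rw [pow_succ]; ring
      _ = r * ∑' m : ℕ, r ^ m := ENNReal.tsum_mul_left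
      _ = r * (1 - r)⁻¹ := by rw [ENNReal.tsum_geometric]
  rw [hgeo, ENNReal.div_eq_inv_mul]
  ring
end

section
/- Let ℙ be a ψ-mixing shift-invariant probability measure on 𝒜^ℕ (with |𝒜| > 1 and ψ_m → 0) such that there is a constant Γ > 0 with ℙ[a_0,...,a_{n-1}] ≤ e^{-Γn} for all cylinders. Let ω be a periodic point with minimal period r in the support of ℙ, β_{ω,n} = ℙ(A_{n+r}^ω | A_n^ω), and suppose β_ω = lim_n β_{ω,n} exists. Then, with κ(r) = lcm_{1≤j≤ℓ} r/gcd(r,d_j) for fixed integers 1 ≤ d_1 < ... < d_ℓ, and ρ_{A_n^ω} = ∏_{j=1}^ℓ ℙ(R^{(n+d_jκ(r))/r} | A_n^ω) where R is the r-prefix cylinder of ω, the limit lim_n ρ_{A_n^ω} exists and equals β_ω^a with a = (κ(r)/r)∑_{i=1}^ℓ d_i. -/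
open MeasureTheory Filter Topology
open scoped BigOperators

/-- Lemma 1: for a ψ-mixing shift-invariant probability measure with
exponential decay of cylinders, a periodic point `ω` of minimal period `r` in the
support, and `β_ω = lim_n ℙ(A_{n+r}^ω | A_n^ω)`, the limit of
`ρ_{A_n^ω} = ∏_{j=1}^ℓ ℙ(A_{n+d_j κ(r)}^ω | A_n^ω)` exists and equals `β_ω^a`,
where `κ(r) = lcm_j (r / gcd(r, d_j))` and `a = (κ(r)/r) ∑_i d_i`. -/
theorem rho_limit_eq_beta_pow {𝒜 : Type*} [Countable 𝒜] [Nontrivial 𝒜]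
    [MeasurableSpace 𝒜] [MeasurableSingletonClass 𝒜]
    (ℙ : Measure (ℕ → 𝒜)) [IsProbabilityMeasure ℙ]
    (hinv : MeasurePreserving shift ℙ ℙ)
    (ψ : ℕ → ℝ) (hψ : Tendsto ψ atTop (𝓝 0))
    (hmix : ∀ (m n : ℕ) (E F : Set (ℕ → 𝒜)),
      MeasurableSet[MeasurableSpace.comap (fun ω (i : Fin n) => ω i) inferInstance] E →
      MeasurableSet F →
      |(ℙ (E ∩ (shift^[n + m]) ⁻¹' F)).toReal - (ℙ E).toReal * (ℙ F).toReal| ≤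
        ψ m * (ℙ E).toReal * (ℙ F).toReal)
    (Γ : ℝ) (hΓ : 0 < Γ)
    (hdecay : ∀ (n : ℕ) (w : ℕ → 𝒜),
      ℙ {γ | ∀ i < n, γ i = w i} ≤ ENNReal.ofReal (Real.exp (-Γ * n)))
    (ω : ℕ → 𝒜) (r : ℕ) (hr : 0 < r)
    (hper : ∀ i, ω (i + r) = ω i)
    (hmin : ∀ r', 0 < r' → r' < r → ∃ i, ω (i + r') ≠ ω i)
    (hsupp : ∀ n, 0 < ℙ {γ | ∀ i < n, γ i = ω i})
    (ℓ : ℕ) (hℓ : 0 < ℓ) (d : Fin ℓ → ℕ) (hd : StrictMono d) (hd1 : ∀ j, 1 ≤ d j)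
    (κ : ℕ) (hκ : κ = Finset.univ.lcm fun j : Fin ℓ => r / Nat.gcd r (d j))
    (a : ℕ) (ha : a = ∑ j : Fin ℓ, κ * d j / r)
    (β : ℝ)
    (hβ : Tendsto (fun n => (ℙ {γ | ∀ i < n + r, γ i = ω i}).toReal /
        (ℙ {γ | ∀ i < n, γ i = ω i}).toReal) atTop (𝓝 β)) :
    Tendsto (fun n => ∏ j : Fin ℓ,
        (ℙ {γ | ∀ i < n + d j * κ, γ i = ω i}).toReal /
          (ℙ {γ | ∀ i < n, γ i = ω i}).toReal) atTop (𝓝 (β ^ a)) := by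
  set P : ℕ → ℝ := fun n => (ℙ {γ | ∀ i < n, γ i = ω i}).toReal with hPdef
  have hP : ∀ n, 0 < P n := fun n =>
    ENNReal.toReal_pos (hsupp n).ne' (measure_ne_top ℙ _)
  -- key: for each k, P (n + k*r) / P n → β ^ k
  have key : ∀ k : ℕ, Tendsto (fun n => P (n + k * r) / P n) atTop (𝓝 (β ^ k)) := by
    intro k
    induction k with
    | zero =>
      simp only [Nat.zero_mul, Nat.add_zero, pow_zero]
      have : (fun n => P n / P n) = fun _ => (1 : ℝ) := by
        funext n; exact div_self (hP n).ne'
      rw [this]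
      exact tendsto_const_nhds
    | succ k ih =>
      have h1 : Tendsto (fun n => P (n + k * r + r) / P (n + k * r)) atTop (𝓝 β) :=
        hβ.comp (tendsto_add_atTop_nat (k * r))
      have h2 := h1.mul ih
      have heq : (fun n => P (n + k * r + r) / P (n + k * r) * (P (n + k * r) / P n)) =
          fun n => P (n + (k + 1) * r) / P n := by
        funext n
        rw [div_mul_div_comm, mul_comm (P (n + k * r)) (P n),
          mul_div_mul_right _ _ (hP (n + k * r)).ne',
          show n + k * r + r = n + (k + 1) * r by ring]
      rw [heq] at h2
      simpa [pow_succ, mul_comm, Nat.mul_comm] using h2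
  -- divisibility: r ∣ d j * κ
  have hdvd : ∀ j : Fin ℓ, r ∣ d j * κ := by
    intro j
    have hg1 : Nat.gcd r (d j) ∣ r := Nat.gcd_dvd_left _ _
    have hg2 : Nat.gcd r (d j) ∣ d j := Nat.gcd_dvd_right _ _
    set g := Nat.gcd r (d j) with hg
    have hgpos : 0 < g := Nat.gcd_pos_of_pos_left _ hr
    obtain ⟨s, hs⟩ := hg2
    obtain ⟨t, ht⟩ := hg1
    have h1 : r ∣ d j * (r / g) := by
      refine ⟨s, ?_⟩
      rw [hs, ht, Nat.mul_div_cancel_left t hgpos]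
      ring
    have h2 : r / Nat.gcd r (d j) ∣ κ := by
      rw [hκ]; exact Finset.dvd_lcm (Finset.mem_univ j)
    exact h1.trans (mul_dvd_mul_left _ h2)
  have ha' : a = ∑ j : Fin ℓ, d j * κ / r := by
    rw [ha]; exact Finset.sum_congr rfl fun j _ => by rw [mul_comm]
  have hrw : (fun n => ∏ j : Fin ℓ, P (n + d j * κ) / P n) =
      fun n => ∏ j : Fin ℓ, P (n + (d j * κ / r) * r) / P n := by
    funext n
    refine Finset.prod_congr rfl fun j _ => ?_
    rw [Nat.div_mul_cancel (hdvd j)]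
  have hprod : Tendsto (fun n => ∏ j : Fin ℓ, P (n + (d j * κ / r) * r) / P n) atTop
      (𝓝 (∏ j : Fin ℓ, β ^ (d j * κ / r))) :=
    tendsto_finset_prod _ fun j _ => key (d j * κ / r)
  have : (∏ j : Fin ℓ, β ^ (d j * κ / r)) = β ^ a := by
    rw [Finset.prod_pow_eq_pow_sum, ha']
  rw [← this]
  show Tendsto (fun n => ∏ j : Fin ℓ, P (n + d j * κ) / P n) atTop _
  rw [hrw]
  exact hprod
end
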